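/- arXiv:math/0311126 — 5 statements merged into one kernel-verified Lean document; each statement's English description precedes it below -/
import Mathlib

section
/- Let a₁, a₂, b₁ be positive real numbers with s := b₁ − a₁ − a₂ > 0. Then the sequence of partial sums ∑_{l=0}^{m-1} Γ(a₁+l)Γ(a₂+l)/(Γ(b₁+l)Γ(1+l)) converges as m → ∞ to Γ(a₁)Γ(a₂)Γ(s)/(Γ(a₁+s)Γ(a₂+s)). -/
/-!
Write `Γ(a₂ + l) Γ(a₁ + s) / Γ(b₁ + l)` as the Beta integral `∫₀¹ t^(a₂+l-1) (1-t)^(a₁+s-1) dt`.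
All terms are nonnegative, so the sum may be taken under the integral, where the binomial series
`∑ Γ(a₁+l) / (Γ(a₁) l!) tˡ = (1-t)^(-a₁)` collapses it to the single Beta integral
`∫₀¹ t^(a₂-1) (1-t)^(s-1) dt = Γ(a₂) Γ(s) / Γ(a₂ + s)`.
-/

open Real Filter MeasureTheory Set
open ProbabilityTheory (beta beta_pos)
open scoped Nat

theorem Real.Gamma_add_nat_div_Gamma {a : ℝ} (ha : ∀ k : ℕ, a ≠ -k) (n : ℕ) :
    Gamma (a + n) / Gamma a = (ascPochhammer ℝ n).eval a := by
  induction n with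
  | zero => simp [Gamma_ne_zero ha]
  | succ n ih =>
    have han : a + n ≠ 0 := fun h => ha n (by linarith)
    rw [Nat.cast_succ, ← add_assoc, Gamma_add_one han, ascPochhammer_succ_eval, ← ih]
    ring

theorem Real.Gamma_add_nat_div_Gamma_mul_factorial_eq_choose {a : ℝ} (ha : ∀ k : ℕ, a ≠ -k)
    (n : ℕ) : Gamma (a + n) / (Gamma a * n !) = Ring.choose (a + n - 1) n := by
  rw [Ring.choose_eq_smul, Polynomial.descPochhammer_smeval_eq_ascPochhammer,
    Polynomial.ascPochhammer_smeval_eq_eval, ← div_div, Gamma_add_nat_div_Gamma ha, smul_eq_mul]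
  ring_nf

theorem Real.hasSum_one_sub_rpow_neg {a x : ℝ} (ha : ∀ k : ℕ, a ≠ -k) (hx : |x| < 1) :
    HasSum (fun n : ℕ => Gamma (a + n) / (Gamma a * n !) * x ^ n) ((1 - x) ^ (-a)) := by
  have hx' : x ∈ Metric.eball (0 : ℝ) 1 := by
    simpa [enorm_eq_nnnorm, ← NNReal.coe_lt_coe] using hx
  have h := (one_div_one_sub_rpow_hasFPowerSeriesOnBall_zero a).hasSum hx'
  simp only [FormalMultilinearSeries.ofScalars_apply_eq, zero_add, smul_eq_mul] at h
  rw [rpow_neg (by linarith [le_abs_self x]), inv_eq_one_div]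
  simpa only [Gamma_add_nat_div_Gamma_mul_factorial_eq_choose ha] using h

theorem Real.hasSum_Gamma_div_mul_rpow_mul {a b c t : ℝ} (ha : ∀ k : ℕ, a ≠ -k)
    (ht : t ∈ Ioo 0 1) :
    HasSum (fun n : ℕ => Gamma (a + n) / (Gamma a * n !) * (t ^ (b + n - 1) * (1 - t) ^ (c - 1)))
      (t ^ (b - 1) * (1 - t) ^ (c - a - 1)) := by
  have hpow : ∀ n : ℕ, t ^ (b + n - 1) = t ^ n * t ^ (b - 1) := fun n => by
    rw [show b + n - 1 = n + (b - 1) by ring, rpow_add ht.1, rpow_natCast]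
  have hsum : t ^ (b - 1) * (1 - t) ^ (c - a - 1) =
      (1 - t) ^ (-a) * t ^ (b - 1) * (1 - t) ^ (c - 1) := by
    rw [show c - a - 1 = -a + (c - 1) by ring, rpow_add (by linarith [ht.2])]
    ring
  simp only [hpow, hsum, ← mul_assoc]
  exact ((hasSum_one_sub_rpow_neg ha (abs_lt.2 ⟨by linarith [ht.1], ht.2⟩)).mul_right
    (t ^ (b - 1))).mul_right ((1 - t) ^ (c - 1))

theorem lintegral_rpow_mul_one_sub_rpow_eq_beta {α β : ℝ} (hα : 0 < α) (hβ : 0 < β) :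
    ∫⁻ t in Ioo 0 1, ENNReal.ofReal (t ^ (α - 1) * (1 - t) ^ (β - 1)) =
      ENNReal.ofReal (beta α β) := by
  have hB := beta_pos hα hβ
  have h := ProbabilityTheory.lintegral_betaPDF_eq_one hα hβ
  simp_rw [ProbabilityTheory.lintegral_betaPDF, mul_assoc,
    ENNReal.ofReal_mul (one_div_pos.2 hB).le] at h
  rw [lintegral_const_mul' _ _ ENNReal.ofReal_ne_top,
    ← ENNReal.eq_div_iff (by simpa using hB) ENNReal.ofReal_ne_top] at h
  rw [h, ENNReal.ofReal_div_of_pos hB]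
  simp

theorem hasSum_of_tsum_ofReal_eq_ofReal {ι : Type*} {f : ι → ℝ} {r : ℝ} (hf : ∀ i, 0 ≤ f i)
    (hr : 0 ≤ r) (h : ∑' i, ENNReal.ofReal (f i) = ENNReal.ofReal r) : HasSum f r := by
  lift f to ι → NNReal using hf
  lift r to NNReal using hr
  simp only [ENNReal.ofReal_coe_nnreal] at h
  exact NNReal.hasSum_coe.2 (ENNReal.hasSum_coe.1 (h ▸ ENNReal.summable.hasSum))

theorem hasSum_Gamma_div_mul_beta {a b c : ℝ} (ha : 0 < a) (hb : 0 < b) (hac : a < c) :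
    HasSum (fun n : ℕ => Gamma (a + n) / (Gamma a * n !) * beta (b + n) c) (beta b (c - a)) := by
  have ha' : ∀ k : ℕ, a ≠ -k := fun k h => by linarith [(Nat.cast_nonneg k : (0 : ℝ) ≤ k)]
  have hcoeff : ∀ n : ℕ, 0 ≤ Gamma (a + n) / (Gamma a * n !) := fun n =>
    div_nonneg (Gamma_pos_of_pos (by positivity)).le (by positivity [Gamma_pos_of_pos ha])
  refine hasSum_of_tsum_ofReal_eq_ofReal
    (fun n => mul_nonneg (hcoeff n) (beta_pos (by positivity) (by linarith)).le)
    (beta_pos hb (by linarith)).le ?_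
  calc ∑' n : ℕ, ENNReal.ofReal (Gamma (a + n) / (Gamma a * n !) * beta (b + n) c)
      = ∑' n : ℕ, ∫⁻ t in Ioo 0 1, ENNReal.ofReal
          (Gamma (a + n) / (Gamma a * n !) * (t ^ (b + n - 1) * (1 - t) ^ (c - 1))) := by
        congr 1 with n
        simp_rw [ENNReal.ofReal_mul (hcoeff n)]
        rw [lintegral_const_mul' _ _ ENNReal.ofReal_ne_top,
          lintegral_rpow_mul_one_sub_rpow_eq_beta (by positivity) (by linarith)]
    _ = ∫⁻ t in Ioo 0 1, ∑' n : ℕ, ENNReal.ofReal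
          (Gamma (a + n) / (Gamma a * n !) * (t ^ (b + n - 1) * (1 - t) ^ (c - 1))) :=
        (lintegral_tsum fun n => by fun_prop).symm
    _ = ∫⁻ t in Ioo 0 1, ENNReal.ofReal (t ^ (b - 1) * (1 - t) ^ (c - a - 1)) := by
        refine setLIntegral_congr_fun measurableSet_Ioo fun t ht => ?_
        have hsum := hasSum_Gamma_div_mul_rpow_mul (b := b) (c := c) ha' ht
        have ht₀ : 0 ≤ t := ht.1.le
        have ht₁ : 0 ≤ 1 - t := by linarith [ht.2]
        rw [← hsum.tsum_eq, ENNReal.ofReal_tsum_of_nonneg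
          (fun n => mul_nonneg (hcoeff n) (by positivity)) hsum.summable]
    _ = ENNReal.ofReal (beta b (c - a)) :=
        lintegral_rpow_mul_one_sub_rpow_eq_beta hb (by linarith)

theorem gauss_summation_partial_sums_general (a₁ a₂ b₁ s : ℝ)
    (ha₁ : 0 < a₁) (ha₂ : 0 < a₂)
    (hs : s = b₁ - a₁ - a₂) (hspos : 0 < s) :
    Tendsto (fun m : ℕ => ∑ l ∈ Finset.range m,
        Gamma (a₁ + l) * Gamma (a₂ + l) / (Gamma (b₁ + l) * Gamma (1 + l)))
      atTop
      (nhds (Gamma a₁ * Gamma a₂ * Gamma s / (Gamma (a₁ + s) * Gamma (a₂ + s)))) := by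
  obtain rfl : b₁ = a₂ + (a₁ + s) := by linarith
  have hseries := (hasSum_Gamma_div_mul_beta ha₁ ha₂ (lt_add_of_pos_right a₁ hspos)).mul_left
    (Gamma a₁ / Gamma (a₁ + s))
  have hΓa₁ := (Gamma_pos_of_pos ha₁).ne'
  have hΓa₁s := (Gamma_pos_of_pos (add_pos ha₁ hspos)).ne'
  convert hseries.tendsto_sum_nat using 3 with m l
  · have hΓb₁ := (Gamma_pos_of_pos (by positivity : 0 < a₂ + (a₁ + s) + l)).ne'
    rw [add_comm (1 : ℝ), Gamma_nat_eq_factorial, beta,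
      show a₂ + l + (a₁ + s) = a₂ + (a₁ + s) + l by ring]
    field_simp
  · rw [beta, add_sub_cancel_left]
    field_simp

theorem gauss_summation_partial_sums (a₁ a₂ b₁ s : ℝ)
    (ha₁ : 0 < a₁) (ha₂ : 0 < a₂) (hb₁ : 0 < b₁)
    (hs : s = b₁ - a₁ - a₂) (hspos : 0 < s) :
    Tendsto (fun m : ℕ => ∑ l ∈ Finset.range m,
        Gamma (a₁ + l) * Gamma (a₂ + l) / (Gamma (b₁ + l) * Gamma (1 + l)))
      atTop
      (nhds (Gamma a₁ * Gamma a₂ * Gamma s / (Gamma (a₁ + s) * Gamma (a₂ + s)))) :=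
  gauss_summation_partial_sums_general a₁ a₂ b₁ s ha₁ ha₂ hs hspos
end

section
/- Let a₁, a₂ be positive reals and b₁ = a₁ + a₂ + 1 (so s = 1, p = 1). Then as m → ∞: ∑_{l=0}^{m-1} Γ(a₁+l)Γ(a₂+l)/(Γ(a₁+a₂+1+l)Γ(1+l)) = 1/(a₁a₂) − 1/(m−1) + (1/2)·(a₁+1)(a₂+1)/((m−1)(m−2)) + O(m^{−3}). -/
/-!
With `Q(m) = Γ(a+m)Γ(b+m) / (Γ(a+b+m)Γ(m))`, the functional equation of `Γ` gives
`Q(l+1) - Q(l) = ab · (l-th summand)`, so the partial sum is `Q(m)/(ab)`; Euler's limit formula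
gives `Q(m) → 1`, so `Q` increases to `1`. For the rational approximation
`q(m) = 1 - ab/(m-1) + ab(a+1)(b+1) / (2(m-1)(m-2))` the consecutive differences of `q/Q` are
exactly `ab(a+1)(b+1)(a+2)(b+2) / (2(m-1)(m-2)(a+b+m) m Q(m+1))`, which is `O(m⁻⁴)` because
`Q(m+1) ≥ Q(1) > 0`. Summing the tail gives `q(m)/Q(m) - 1 = O(m⁻³)`, and `0 < Q ≤ 1` turns this
into `Q(m) - q(m) = O(m⁻³)`.
-/

open Real Filter Asymptotics Topology

theorem dist_le_of_tendsto_of_dist_succ_le {α : Type*} [PseudoMetricSpace α] {u : ℕ → α} {L : α}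
    {v : ℕ → ℝ} {N : ℕ} (hu : Tendsto u atTop (𝓝 L)) (hv : Tendsto v atTop (𝓝 0))
    (h : ∀ k ≥ N, dist (u k) (u (k + 1)) ≤ v k - v (k + 1)) {m : ℕ} (hm : N ≤ m) :
    dist (u m) L ≤ v m := by
  have hbound : ∀ n ≥ m, dist (u m) (u n) ≤ v m - v n := fun n hn => by
    calc dist (u m) (u n) ≤ ∑ k ∈ Finset.Ico m n, (v k - v (k + 1)) :=
          dist_le_Ico_sum_of_dist_le hn fun hk _ => h _ (hm.trans hk)
      _ = v m - v n := by
          have h := Finset.sum_Ico_sub (fun k => -v k) hn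
          simp only [sub_neg_eq_add, neg_add_eq_sub] at h
          exact h
  simpa using le_of_tendsto_of_tendsto (tendsto_const_nhds.dist hu) (tendsto_const_nhds.sub hv)
    (eventually_atTop.2 ⟨m, hbound⟩)

theorem Real.Gamma_add_nat_add_one {s : ℝ} (hs : 0 < s) (n : ℕ) :
    Gamma (s + n + 1) = (∏ j ∈ Finset.range (n + 1), (s + j)) * Gamma s := by
  induction n with
  | zero => simp [Real.Gamma_add_one hs.ne']
  | succ n ih =>
    rw [Finset.prod_range_succ, Nat.cast_succ, ← add_assoc, Real.Gamma_add_one (by positivity), ih]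
    ring

theorem Real.tendsto_rpow_mul_Gamma_div_Gamma {s : ℝ} (hs : 0 < s) :
    Tendsto (fun n : ℕ => (n : ℝ) ^ s * Gamma (n + 1) / Gamma (s + n + 1)) atTop (𝓝 1) := by
  have hΓ : Gamma s ≠ 0 := (Gamma_pos_of_pos hs).ne'
  have h := (GammaSeq_tendsto_Gamma s).div_const (Gamma s)
  rw [div_self hΓ] at h
  refine h.congr fun n => ?_
  have hprod : (0 : ℝ) < ∏ j ∈ Finset.range (n + 1), (s + j) :=
    Finset.prod_pos fun j _ => by positivity
  rw [GammaSeq, Gamma_add_nat_add_one hs, Gamma_nat_eq_factorial]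
  field_simp

noncomputable def gammaRatio (a b : ℝ) (m : ℕ) : ℝ :=
  Gamma (a + m) * Gamma (b + m) / (Gamma (a + b + m) * Gamma m)

noncomputable def gammaSummand (a b : ℝ) (l : ℕ) : ℝ :=
  Gamma (a + l) * Gamma (b + l) / (Gamma (a + b + 1 + l) * Gamma (1 + l))

section GammaRatio

variable {a b : ℝ} (ha : 0 < a) (hb : 0 < b)
include ha hb

theorem gammaSummand_pos (l : ℕ) : 0 < gammaSummand a b l := by
  unfold gammaSummand
  have := Gamma_pos_of_pos (show 0 < a + l by positivity)
  have := Gamma_pos_of_pos (show 0 < b + l by positivity)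
  have := Gamma_pos_of_pos (show 0 < a + b + 1 + l by positivity)
  have := Gamma_pos_of_pos (show (0 : ℝ) < 1 + l by positivity)
  positivity

theorem gammaRatio_eq_mul_gammaSummand (l : ℕ) :
    gammaRatio a b l = (a + b + l) * l * gammaSummand a b l := by
  rcases Nat.eq_zero_or_pos l with rfl | hl
  · simp [gammaRatio] -- `Γ 0 = 0` in Mathlib, so `gammaRatio a b 0 = 0`
  · have hl : (0 : ℝ) < l := by exact_mod_cast hl
    have hab : 0 < a + b + l := by positivity
    have := Gamma_pos_of_pos hab
    have := Gamma_pos_of_pos hl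
    rw [gammaRatio, gammaSummand, show a + b + 1 + (l : ℝ) = a + b + l + 1 by ring,
      add_comm (1 : ℝ), Gamma_add_one hab.ne', Gamma_add_one hl.ne']
    field_simp

theorem gammaRatio_succ_eq_mul_gammaSummand (l : ℕ) :
    gammaRatio a b (l + 1) = (a + l) * (b + l) * gammaSummand a b l := by
  rw [gammaRatio, gammaSummand, Nat.cast_succ, ← add_assoc, ← add_assoc,
    show a + b + (l + 1 : ℝ) = a + b + 1 + l by ring, add_comm (l : ℝ) 1,
    Gamma_add_one (by positivity), Gamma_add_one (by positivity)]
  ring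

theorem gammaRatio_succ_sub (l : ℕ) :
    gammaRatio a b (l + 1) - gammaRatio a b l = a * b * gammaSummand a b l := by
  rw [gammaRatio_succ_eq_mul_gammaSummand ha hb, gammaRatio_eq_mul_gammaSummand ha hb]
  ring

theorem sum_gammaSummand (m : ℕ) :
    ∑ l ∈ Finset.range m, gammaSummand a b l = gammaRatio a b m / (a * b) := by
  rw [eq_div_iff (by positivity), Finset.sum_mul]
  have h0 : gammaRatio a b 0 = 0 := by simpa using gammaRatio_eq_mul_gammaSummand ha hb 0
  simpa [gammaRatio_succ_sub ha hb, mul_comm, h0] using Finset.sum_range_sub (gammaRatio a b) m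

theorem strictMono_gammaRatio : StrictMono (gammaRatio a b) :=
  strictMono_nat_of_lt_succ fun l => sub_pos.1 <| by
    rw [gammaRatio_succ_sub ha hb]; exact mul_pos (mul_pos ha hb) (gammaSummand_pos ha hb l)

theorem gammaRatio_pos {m : ℕ} (hm : 0 < m) : 0 < gammaRatio a b m := by
  simpa [gammaRatio] using strictMono_gammaRatio ha hb hm

theorem tendsto_gammaRatio : Tendsto (gammaRatio a b) atTop (𝓝 1) := by
  rw [← tendsto_add_atTop_iff_nat 1]
  have h := (tendsto_rpow_mul_Gamma_div_Gamma (add_pos ha hb)).div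
    ((tendsto_rpow_mul_Gamma_div_Gamma ha).mul (tendsto_rpow_mul_Gamma_div_Gamma hb)) (by norm_num)
  rw [mul_one, div_one] at h
  refine h.congr' ?_
  filter_upwards [eventually_gt_atTop 0] with n hn
  have hn : (0 : ℝ) < n := by exact_mod_cast hn
  have := Gamma_pos_of_pos (show 0 < a + n + 1 by positivity)
  have := Gamma_pos_of_pos (show 0 < b + n + 1 by positivity)
  have := Gamma_pos_of_pos (show 0 < a + b + n + 1 by positivity)
  have := Gamma_pos_of_pos (show (0 : ℝ) < n + 1 by positivity)
  simp only [Pi.div_apply]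
  rw [gammaRatio, Nat.cast_succ, ← add_assoc, ← add_assoc, ← add_assoc, rpow_add hn]
  field_simp

theorem gammaRatio_le_one (m : ℕ) : gammaRatio a b m ≤ 1 :=
  (strictMono_gammaRatio ha hb).monotone.ge_of_tendsto (tendsto_gammaRatio ha hb) m

end GammaRatio

noncomputable def gammaRatioApprox (a b x : ℝ) : ℝ :=
  1 - a * b / (x - 1) + a * b * (a + 1) * (b + 1) / 2 / ((x - 1) * (x - 2))

theorem gammaRatioApprox_mul_sub (a b : ℝ) {x : ℝ} (hx0 : x ≠ 0) (hx1 : x ≠ 1) (hx2 : x ≠ 2) :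
    gammaRatioApprox a b x * ((a + x) * (b + x))
        - gammaRatioApprox a b (x + 1) * ((a + b + x) * x)
      = a * b * (a + 1) * (b + 1) * (a + 2) * (b + 2) / (2 * ((x - 1) * (x - 2))) := by
  have h1 : x - 1 ≠ 0 := sub_ne_zero.2 hx1
  have h2 : x - 2 ≠ 0 := sub_ne_zero.2 hx2
  simp only [gammaRatioApprox, add_sub_cancel_right, show x + 1 - 2 = x - 1 by ring]
  field_simp
  ring

theorem tendsto_gammaRatioApprox (a b : ℝ) : Tendsto (gammaRatioApprox a b) atTop (𝓝 1) := by
  have h1 : Tendsto (fun x : ℝ => x - 1) atTop atTop := tendsto_atTop_add_const_right _ _ tendsto_id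
  have h2 : Tendsto (fun x : ℝ => x - 2) atTop atTop := tendsto_atTop_add_const_right _ _ tendsto_id
  have h := ((tendsto_const_nhds (x := (1 : ℝ))).sub
    ((tendsto_const_nhds (x := a * b)).div_atTop h1)).add
    ((tendsto_const_nhds (x := a * b * (a + 1) * (b + 1) / 2)).div_atTop
      (h1.atTop_mul_atTop₀ h2))
  rw [sub_zero, add_zero] at h
  exact h

noncomputable def cubicTail (c x : ℝ) : ℝ := c / ((x - 3) * (x - 2) * (x - 1))

theorem cubicTail_sub_succ (c : ℝ) {x : ℝ} (hx : 3 < x) :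
    cubicTail c x - cubicTail c (x + 1) = 3 * c / ((x - 3) * (x - 2) * (x - 1) * x) := by
  have h3 : x - 3 ≠ 0 := by linarith
  have h2 : x - 2 ≠ 0 := by linarith
  have h1 : x - 1 ≠ 0 := by linarith
  have h0 : x ≠ 0 := by linarith
  simp only [cubicTail, show x + 1 - 3 = x - 2 by ring, show x + 1 - 2 = x - 1 by ring,
    add_sub_cancel_right]
  field_simp
  ring

theorem tendsto_cubicTail (c : ℝ) : Tendsto (cubicTail c) atTop (𝓝 0) := by
  have h : ∀ d : ℝ, Tendsto (fun x : ℝ => x - d) atTop atTop := fun d =>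
    tendsto_atTop_add_const_right _ _ tendsto_id
  exact tendsto_const_nhds.div_atTop (((h 3).atTop_mul_atTop₀ (h 2)).atTop_mul_atTop₀ (h 1))

theorem isBigO_cubicTail (c : ℝ) :
    (fun m : ℕ => cubicTail c m) =O[atTop] fun m : ℕ => (m : ℝ) ^ (-3 : ℝ) := by
  refine IsBigO.of_bound (8 * |c|) ?_
  filter_upwards [eventually_ge_atTop 6] with m hm
  have hm : (6 : ℝ) ≤ m := by exact_mod_cast hm
  have hD : (m : ℝ) ^ 3 / 8 ≤ (m - 3) * (m - 2) * (m - 1) := by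
    calc (m : ℝ) ^ 3 / 8 = (m / 2) * (m / 2) * (m / 2) := by ring
      _ ≤ (m - 3) * (m - 2) * (m - 1) := by gcongr <;> nlinarith
  have hm0 : (0 : ℝ) < m := by linarith
  have hDpos : (0 : ℝ) < (m - 3) * (m - 2) * (m - 1) := lt_of_lt_of_le (by positivity) hD
  rw [cubicTail, Real.norm_eq_abs, Real.norm_eq_abs, abs_div, abs_of_pos hDpos,
    abs_of_pos (rpow_pos_of_pos hm0 _), rpow_neg_ofNat, zpow_neg, zpow_ofNat]
  calc |c| / ((m - 3) * (m - 2) * (m - 1)) ≤ |c| / ((m : ℝ) ^ 3 / 8) :=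
        div_le_div_of_nonneg_left (abs_nonneg c) (by positivity) hD
    _ = 8 * |c| * ((m : ℝ) ^ 3)⁻¹ := by field_simp

section Approximation

variable {a b : ℝ} (ha : 0 < a) (hb : 0 < b)
include ha hb

theorem gammaRatioApprox_div_gammaRatio_sub_succ {k : ℕ} (hk : 3 ≤ k) :
    gammaRatioApprox a b k / gammaRatio a b k
        - gammaRatioApprox a b (k + 1 : ℕ) / gammaRatio a b (k + 1)
      = a * b * (a + 1) * (b + 1) * (a + 2) * (b + 2) / (2 * ((k - 1) * (k - 2)))
          / ((a + b + k) * k * gammaRatio a b (k + 1)) := by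
  have hk : (3 : ℝ) ≤ k := by exact_mod_cast hk
  have hT := gammaSummand_pos ha hb k
  have : (0 : ℝ) < a + b + k := by positivity
  have : (0 : ℝ) < a + k := by positivity
  have : (0 : ℝ) < b + k := by positivity
  rw [← gammaRatioApprox_mul_sub a b (x := k) (by linarith) (by linarith) (by linarith),
    gammaRatio_eq_mul_gammaSummand ha hb k, gammaRatio_succ_eq_mul_gammaSummand ha hb k]
  push_cast
  field_simp

theorem dist_gammaRatioApprox_div_gammaRatio_succ_le {k : ℕ} (hk : 4 ≤ k) :
    dist (gammaRatioApprox a b k / gammaRatio a b k)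
        (gammaRatioApprox a b (k + 1 : ℕ) / gammaRatio a b (k + 1))
      ≤ cubicTail (a * b * (a + 1) * (b + 1) * (a + 2) * (b + 2) / (6 * gammaRatio a b 1)) k
        - cubicTail (a * b * (a + 1) * (b + 1) * (a + 2) * (b + 2) / (6 * gammaRatio a b 1))
          (k + 1 : ℕ) := by
  set K := a * b * (a + 1) * (b + 1) * (a + 2) * (b + 2)
  have hK : 0 < K := by positivity
  have hk : (4 : ℝ) ≤ k := by exact_mod_cast hk
  have hQ1 := gammaRatio_pos ha hb one_pos
  have hQ : gammaRatio a b 1 ≤ gammaRatio a b (k + 1) :=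
    (strictMono_gammaRatio ha hb).monotone (by omega)
  have h12 : 0 < ((k : ℝ) - 1) * (k - 2) := mul_pos (by linarith) (by linarith)
  have hP : 0 < 2 * (((k : ℝ) - 1) * (k - 2) * k) := by positivity
  rw [Real.dist_eq, gammaRatioApprox_div_gammaRatio_sub_succ ha hb (by omega), Nat.cast_succ,
    cubicTail_sub_succ _ (by linarith)]
  calc |K / (2 * ((k - 1) * (k - 2))) / ((a + b + k) * k * gammaRatio a b (k + 1))|
      = K / (2 * ((k - 1) * (k - 2) * k) * ((a + b + k) * gammaRatio a b (k + 1))) := by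
        have hQk := gammaRatio_pos ha hb k.succ_pos
        rw [abs_of_pos (div_pos (div_pos hK (mul_pos two_pos h12)) (by positivity)), div_div]
        ring
    _ ≤ K / (2 * ((k - 1) * (k - 2) * k) * ((k - 3) * gammaRatio a b 1)) := by
        refine div_le_div_of_nonneg_left hK.le
          (mul_pos hP (mul_pos (by linarith) hQ1)) (mul_le_mul_of_nonneg_left ?_ hP.le)
        exact mul_le_mul (by linarith) hQ hQ1.le (by positivity)
    _ = 3 * (K / (6 * gammaRatio a b 1)) / ((k - 3) * (k - 2) * (k - 1) * k) := by
        field_simp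
        ring

theorem abs_gammaRatio_sub_gammaRatioApprox_le {m : ℕ} (hm : 4 ≤ m) :
    |gammaRatio a b m - gammaRatioApprox a b m|
      ≤ cubicTail (a * b * (a + 1) * (b + 1) * (a + 2) * (b + 2) / (6 * gammaRatio a b 1)) m := by
  have hQ := gammaRatio_pos ha hb (by omega : 0 < m)
  have hlim : Tendsto (fun k : ℕ => gammaRatioApprox a b k / gammaRatio a b k) atTop (𝓝 1) := by
    have h := ((tendsto_gammaRatioApprox a b).comp tendsto_natCast_atTop_atTop).div
      (tendsto_gammaRatio ha hb) one_ne_zero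
    rwa [div_one] at h
  have hdist := dist_le_of_tendsto_of_dist_succ_le hlim
    ((tendsto_cubicTail _).comp tendsto_natCast_atTop_atTop)
    (fun k hk => dist_gammaRatioApprox_div_gammaRatio_succ_le ha hb hk) hm
  calc |gammaRatio a b m - gammaRatioApprox a b m|
      = |gammaRatio a b m| * |gammaRatioApprox a b m / gammaRatio a b m - 1| := by
        rw [← abs_mul, mul_sub, mul_div_cancel₀ _ hQ.ne', mul_one, abs_sub_comm]
    _ ≤ 1 * cubicTail _ m := by
        rw [abs_of_pos hQ, ← Real.dist_eq]
        exact mul_le_mul (gammaRatio_le_one ha hb m) hdist dist_nonneg zero_le_one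
    _ = _ := one_mul _

theorem isBigO_gammaRatio_sub_gammaRatioApprox :
    (fun m : ℕ => gammaRatio a b m - gammaRatioApprox a b m)
      =O[atTop] fun m : ℕ => (m : ℝ) ^ (-3 : ℝ) :=
  (IsBigO.of_bound' <| eventually_atTop.2 ⟨4, fun _ hm =>
    (abs_gammaRatio_sub_gammaRatioApprox_le ha hb hm).trans (le_abs_self _)⟩).trans
    (isBigO_cubicTail _)

end Approximation

theorem s_eq_one_partial_sums (a₁ a₂ : ℝ) (ha₁ : 0 < a₁) (ha₂ : 0 < a₂) :
    (fun m : ℕ =>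
        (∑ l ∈ Finset.range m,
          Gamma (a₁ + l) * Gamma (a₂ + l) / (Gamma (a₁ + a₂ + 1 + l) * Gamma (1 + l)))
        - (1 / (a₁ * a₂) - 1 / ((m : ℝ) - 1)
            + (1 / 2) * ((a₁ + 1) * (a₂ + 1)) / (((m : ℝ) - 1) * ((m : ℝ) - 2))))
      =O[atTop] fun m : ℕ => (m : ℝ) ^ (-3 : ℝ) := by
  have hsum : ∀ m : ℕ, (∑ l ∈ Finset.range m, gammaSummand a₁ a₂ l)
      - (1 / (a₁ * a₂) - 1 / ((m : ℝ) - 1)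
            + (1 / 2) * ((a₁ + 1) * (a₂ + 1)) / (((m : ℝ) - 1) * ((m : ℝ) - 2)))
      = (a₁ * a₂)⁻¹ * (gammaRatio a₁ a₂ m - gammaRatioApprox a₁ a₂ m) := fun m => by
    rw [sum_gammaSummand ha₁ ha₂, gammaRatioApprox]
    field_simp
  exact ((isBigO_gammaRatio_sub_gammaRatioApprox ha₁ ha₂).const_mul_left (a₁ * a₂)⁻¹).congr_left
    fun m => (hsum m).symm
end

section
/- Let a₁, a₂ be positive reals and b₁ = a₁ + a₂ + 2 (so s = 2, p = 1). Then as m → ∞: ∑_{l=0}^{m-1} Γ(a₁+l)Γ(a₂+l)/(Γ(a₁+a₂+2+l)Γ(1+l)) = 1/(a₁(a₁+1)a₂(a₂+1)) − (1/2)·1/((m−1)(m−2)) + O(m^{−3}). -/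
open Real Filter Asymptotics Topology

lemma wendel_upper {x s : ℝ} (hx : 0 < x) (hs : 0 ≤ s) (hs1 : s ≤ 1) :
    Gamma (x + s) ≤ x ^ s * Gamma x := by
  have hΓx : 0 < Gamma x := Gamma_pos_of_pos hx
  have h := convexOn_log_Gamma.2 (Set.mem_Ioi.2 hx) (Set.mem_Ioi.2 (by linarith : (0:ℝ) < x + 1))
    (by linarith : (0:ℝ) ≤ 1 - s) hs (by ring)
  simp only [smul_eq_mul, Function.comp_apply] at h
  have harg : (1 - s) * x + s * (x + 1) = x + s := by ring
  rw [harg] at h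
  rw [Real.Gamma_add_one hx.ne'] at h
  rw [Real.log_mul hx.ne' hΓx.ne'] at h
  have h2 : Real.log (Gamma (x + s)) ≤ Real.log (Gamma x) + s * Real.log x := by linarith
  have h3 : Gamma (x + s) ≤ Real.exp (Real.log (Gamma x) + s * Real.log x) := by
    rw [← Real.log_le_iff_le_exp (Gamma_pos_of_pos (by linarith))]
    exact h2
  calc Gamma (x + s) ≤ Real.exp (Real.log (Gamma x) + s * Real.log x) := h3
    _ = x ^ s * Gamma x := by
        rw [Real.exp_add, Real.exp_log hΓx, Real.rpow_def_of_pos hx, mul_comm (Real.log x) s,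
          mul_comm]

lemma wendel_lower {x s : ℝ} (hx : 0 < x) (hs : 0 ≤ s) (hs1 : s ≤ 1) :
    (1 - s / x) * (x ^ s * Gamma x) ≤ Gamma (x + s) := by
  have hΓx : 0 < Gamma x := Gamma_pos_of_pos hx
  have hxs : (0:ℝ) < x + s := by linarith
  have hΓxs : 0 < Gamma (x + s) := Gamma_pos_of_pos hxs
  rcases le_or_gt 1 (s / x) with hcase | hcase
  · have h0 : (1 - s / x) ≤ 0 := by linarith
    have : (1 - s / x) * (x ^ s * Gamma x) ≤ 0 :=
      mul_nonpos_of_nonpos_of_nonneg h0 (by positivity)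
    linarith
  -- convexity at x+s, x+s+1 with weights s, 1-s
  have h := convexOn_log_Gamma.2 (Set.mem_Ioi.2 hxs) (Set.mem_Ioi.2 (by linarith : (0:ℝ) < x + s + 1))
    hs (by linarith : (0:ℝ) ≤ 1 - s) (by ring)
  simp only [smul_eq_mul, Function.comp_apply] at h
  have harg : s * (x + s) + (1 - s) * (x + s + 1) = x + 1 := by ring
  rw [harg] at h
  rw [Real.Gamma_add_one hxs.ne', Real.log_mul hxs.ne' hΓxs.ne'] at h
  -- h : log Γ(x+1) ≤ s * log Γ(x+s) + (1-s) * (log (x+s) + log Γ(x+s))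
  have h2 : Real.log (Gamma (x + 1)) ≤ Real.log (Gamma (x + s)) + (1 - s) * Real.log (x + s) := by
    nlinarith [h]
  have h3 : Gamma (x + 1) ≤ Gamma (x + s) * (x + s) ^ (1 - s) := by
    have := (Real.log_le_iff_le_exp (Gamma_pos_of_pos (by linarith : (0:ℝ) < x + 1))).1 h2
    calc Gamma (x + 1) ≤ Real.exp (Real.log (Gamma (x + s)) + (1 - s) * Real.log (x + s)) := this
      _ = Gamma (x + s) * (x + s) ^ (1 - s) := by
          rw [Real.exp_add, Real.exp_log hΓxs, Real.rpow_def_of_pos hxs,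
            mul_comm (Real.log (x+s)) (1 - s)]
  rw [Real.Gamma_add_one hx.ne'] at h3
  -- now: x Γx ≤ Γ(x+s) (x+s)^(1-s);  want (1 - s/x) x^s Γ x ≤ Γ(x+s)
  -- key arithmetic: (1 - s/x) * x^s * (x+s)^(1-s) ≤ x
  have key : (1 - s / x) * x ^ s * (x + s) ^ (1 - s) ≤ x := by
    have e1 : (x + s) ^ (1 - s) = x ^ (1 - s) * (1 + s / x) ^ (1 - s) := by
      rw [← Real.mul_rpow hx.le (by positivity)]
      congr 1
      field_simp
    have e2 : (1 + s / x) ^ (1 - s) ≤ 1 + s / x := by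
      have hb : (1:ℝ) ≤ 1 + s / x := by
        have := div_nonneg hs hx.le; linarith
      calc (1 + s / x) ^ (1 - s) ≤ (1 + s / x) ^ (1:ℝ) :=
            Real.rpow_le_rpow_of_exponent_le hb (by linarith)
        _ = 1 + s / x := Real.rpow_one _
    have e3 : (1 - s / x) * (1 + s / x) ≤ 1 := by nlinarith [sq_nonneg (s / x)]
    have hx1s : (0:ℝ) ≤ x ^ (1 - s) := (Real.rpow_pos_of_pos hx _).le
    have hxe : x ^ s * x ^ (1 - s) = x := by
      rw [← Real.rpow_add hx]; norm_num
    have h4 : (1 - s / x) * x ^ s * (x ^ (1 - s) * (1 + s / x) ^ (1-s))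
        ≤ x ^ s * x ^ (1 - s) * ((1 - s / x) * (1 + s / x)) := by
      have hnn : 0 ≤ 1 - s / x := by linarith
      have := mul_le_mul_of_nonneg_left e2 (by positivity : (0:ℝ) ≤ (1 - s/x) * x ^ s * x ^ (1-s))
      nlinarith [this]
    calc (1 - s / x) * x ^ s * (x + s) ^ (1 - s)
        = (1 - s / x) * x ^ s * (x ^ (1 - s) * (1 + s / x) ^ (1-s)) := by rw [e1]
      _ ≤ x ^ s * x ^ (1 - s) * ((1 - s / x) * (1 + s / x)) := h4
      _ ≤ x ^ s * x ^ (1 - s) * 1 := by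
          apply mul_le_mul_of_nonneg_left e3 (by positivity)
      _ = x := by rw [mul_one, hxe]
  -- combine
  have hxs1s : 0 < (x + s) ^ (1 - s) := Real.rpow_pos_of_pos hxs _
  have := mul_le_mul_of_nonneg_left h3 (by positivity : (0:ℝ) ≤ x ^ s * Gamma x / x)
  -- messy; do nlinarith
  nlinarith [key, h3, hΓx, hΓxs, hxs1s, Real.rpow_pos_of_pos hx s,
    mul_le_mul_of_nonneg_right key hΓx.le]

lemma ratio_aux (n : ℕ) : ∀ x : ℝ, 0 < x → x ≤ n + 1 →
    (fun l : ℕ => Gamma ((l:ℝ) + x) / ((l:ℝ) ^ x * Gamma l) - 1) =O[atTop]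
      fun l : ℕ => 1 / (l:ℝ) := by
  induction n with
  | zero =>
    intro x hx hx1
    rw [isBigO_iff]
    refine ⟨x, ?_⟩
    filter_upwards [eventually_ge_atTop 1] with l hl
    have hl' : (0:ℝ) < (l:ℝ) := by exact_mod_cast hl
    have hd : (0:ℝ) < (l:ℝ) ^ x * Gamma (l:ℝ) := by
      have := Gamma_pos_of_pos hl'
      positivity
    have hup := wendel_upper hl' hx.le (by norm_num at hx1; linarith)
    have hlo := wendel_lower hl' hx.le (by norm_num at hx1; linarith)
    have h1 : Gamma ((l:ℝ) + x) / ((l:ℝ) ^ x * Gamma l) ≤ 1 := by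
      rw [div_le_one hd]; linarith
    have h2 : 1 - x / l ≤ Gamma ((l:ℝ) + x) / ((l:ℝ) ^ x * Gamma l) := by
      rw [le_div_iff₀ hd]; linarith
    rw [Real.norm_eq_abs, Real.norm_eq_abs, abs_le]
    constructor
    · have : |1 / (l:ℝ)| = 1 / l := abs_of_pos (by positivity)
      rw [this]
      have : x * (1/(l:ℝ)) = x / l := by ring
      rw [this]; linarith
    · have : |1 / (l:ℝ)| = 1 / l := abs_of_pos (by positivity)
      rw [this]
      have hxl : 0 ≤ x * (1/(l:ℝ)) := by positivity
      linarith
  | succ n ih =>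
    intro x hx hxn
    rcases le_or_gt x (n + 1) with h | h
    · exact ih x hx h
    have hx1 : 0 < x - 1 := by
      have : (1:ℝ) ≤ (n:ℝ) + 1 := by
        have := Nat.cast_nonneg (α := ℝ) n; linarith
      linarith
    have ih' := ih (x - 1) hx1 (by push_cast at hxn ⊢; linarith)
    rw [isBigO_iff] at ih'
    obtain ⟨c, hc⟩ := ih'
    rw [isBigO_iff]
    refine ⟨(max c 0) + (x - 1) * (1 + max c 0), ?_⟩
    filter_upwards [hc, eventually_ge_atTop 1] with l hcl hl
    have hl' : (0:ℝ) < (l:ℝ) := by exact_mod_cast hl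
    have hl1 : (1:ℝ) ≤ (l:ℝ) := by exact_mod_cast hl
    have hΓl : 0 < Gamma (l:ℝ) := Gamma_pos_of_pos hl'
    set g := Gamma ((l:ℝ) + (x - 1)) / ((l:ℝ) ^ (x - 1) * Gamma l) with hg
    have hgb : |g - 1| ≤ max c 0 / l := by
      rw [Real.norm_eq_abs, Real.norm_eq_abs] at hcl
      have : |1/(l:ℝ)| = 1/l := abs_of_pos (by positivity)
      rw [this] at hcl
      calc |g - 1| ≤ c * (1/l) := hcl
        _ ≤ max c 0 * (1/l) := by
            apply mul_le_mul_of_nonneg_right (le_max_left _ _) (by positivity)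
        _ = max c 0 / l := by ring
    -- identity: f x l = ((l + x - 1)/l) * g
    have hΓrec : Gamma ((l:ℝ) + x) = ((l:ℝ) + x - 1) * Gamma ((l:ℝ) + (x - 1)) := by
      have : (l:ℝ) + x = ((l:ℝ) + (x - 1)) + 1 := by ring
      rw [this, Real.Gamma_add_one (by linarith : (l:ℝ) + (x-1) ≠ 0)]
      ring_nf
    have hrpow : (l:ℝ) ^ x = (l:ℝ) ^ (x - 1) * l := by
      conv_lhs => rw [show x = (x - 1) + 1 by ring]
      rw [Real.rpow_add hl', Real.rpow_one]
    have hiden : Gamma ((l:ℝ) + x) / ((l:ℝ) ^ x * Gamma l) - 1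
        = (g - 1) + ((x - 1) / l) * g := by
      rw [hΓrec, hrpow, hg]
      have h1 : (l:ℝ) ^ (x-1) ≠ 0 := (Real.rpow_pos_of_pos hl' _).ne'
      field_simp
      ring
    rw [hiden]
    have hgabs : |g| ≤ 1 + max c 0 := by
      have := abs_abs_sub_abs_le_abs_sub g 1
      have h1 : |g| - 1 ≤ |g - 1| := by
        have := abs_sub_abs_le_abs_sub g 1
        simpa using this
      have h2 : max c 0 / l ≤ max c 0 := by
        rw [div_le_iff₀ hl']
        nlinarith [le_max_right c 0]
      linarith [hgb]
    rw [Real.norm_eq_abs, Real.norm_eq_abs]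
    have habs1 : |1/(l:ℝ)| = 1/l := abs_of_pos (by positivity)
    rw [habs1]
    calc |(g - 1) + ((x - 1) / l) * g| ≤ |g - 1| + |((x - 1) / l) * g| := abs_add_le _ _
      _ ≤ max c 0 / l + ((x-1)/l) * (1 + max c 0) := by
          have : |((x - 1) / l) * g| = ((x-1)/l) * |g| := by
            rw [abs_mul, abs_of_pos (by positivity : (0:ℝ) < (x-1)/l)]
          rw [this]
          have := mul_le_mul_of_nonneg_left hgabs (by positivity : (0:ℝ) ≤ (x-1)/l)
          linarith [hgb]
      _ = (max c 0 + (x - 1) * (1 + max c 0)) * (1/l) := by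
          field_simp

lemma ratio_isBigO {x : ℝ} (hx : 0 < x) :
    (fun l : ℕ => Gamma ((l:ℝ) + x) / ((l:ℝ) ^ x * Gamma l) - 1) =O[atTop]
      fun l : ℕ => 1 / (l:ℝ) :=
  ratio_aux ⌈x⌉₊ x hx (le_trans (Nat.le_ceil x) (by linarith [Nat.cast_nonneg (α := ℝ) ⌈x⌉₊]))

lemma hu_tendsto : Tendsto (fun l : ℕ => 1 / (l:ℝ)) atTop (𝓝 0) :=
  tendsto_one_div_atTop_nhds_zero_nat

lemma ratio_tendsto {x : ℝ} (hx : 0 < x) :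
    Tendsto (fun l : ℕ => Gamma ((l:ℝ) + x) / ((l:ℝ) ^ x * Gamma l)) atTop (𝓝 1) := by
  have h := (ratio_isBigO hx).trans_tendsto hu_tendsto
  have := h.add_const 1
  simpa using this

lemma q_isBigO {a b : ℝ} (ha : 0 < a) (hb : 0 < b) :
    (fun l : ℕ => Gamma ((l:ℝ) + a) * Gamma ((l:ℝ) + b)
        / (Gamma (l:ℝ) * Gamma ((l:ℝ) + (a + b))) - 1) =O[atTop]
      fun l : ℕ => 1 / (l:ℝ) := by
  set fa := fun l : ℕ => Gamma ((l:ℝ) + a) / ((l:ℝ) ^ a * Gamma l) with hfa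
  set fb := fun l : ℕ => Gamma ((l:ℝ) + b) / ((l:ℝ) ^ b * Gamma l) with hfb
  set fc := fun l : ℕ => Gamma ((l:ℝ) + (a + b)) / ((l:ℝ) ^ (a + b) * Gamma l) with hfc
  have hA : (fun l : ℕ => fa l - 1) =O[atTop] fun l : ℕ => 1/(l:ℝ) := ratio_isBigO ha
  have hB : (fun l : ℕ => fb l - 1) =O[atTop] fun l : ℕ => 1/(l:ℝ) := ratio_isBigO hb
  have hC : (fun l : ℕ => fc l - 1) =O[atTop] fun l : ℕ => 1/(l:ℝ) :=
    ratio_isBigO (by linarith)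
  have hfbt : Tendsto fb atTop (𝓝 1) := ratio_tendsto hb
  have hfct : Tendsto fc atTop (𝓝 1) := ratio_tendsto (by linarith : (0:ℝ) < a + b)
  have hinvt : Tendsto (fun l : ℕ => (fc l)⁻¹) atTop (𝓝 1) := by
    have := hfct.inv₀ one_ne_zero
    simpa using this
  -- eventual identity
  have hev : ∀ᶠ l : ℕ in atTop,
      Gamma ((l:ℝ) + a) * Gamma ((l:ℝ) + b) / (Gamma (l:ℝ) * Gamma ((l:ℝ) + (a + b))) - 1
        = ((fa l - 1) * fb l + (fb l - 1) - (fc l - 1)) * (fc l)⁻¹ := by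
    filter_upwards [eventually_ge_atTop 1] with l hl
    have hl' : (0:ℝ) < (l:ℝ) := by exact_mod_cast hl
    have hΓl : 0 < Gamma (l:ℝ) := Gamma_pos_of_pos hl'
    have hΓa : 0 < Gamma ((l:ℝ) + a) := Gamma_pos_of_pos (by linarith)
    have hΓb : 0 < Gamma ((l:ℝ) + b) := Gamma_pos_of_pos (by linarith)
    have hΓc : 0 < Gamma ((l:ℝ) + (a + b)) := Gamma_pos_of_pos (by linarith)
    have hpa : (0:ℝ) < (l:ℝ) ^ a := Real.rpow_pos_of_pos hl' _
    have hpb : (0:ℝ) < (l:ℝ) ^ b := Real.rpow_pos_of_pos hl' _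
    have hpc : (0:ℝ) < (l:ℝ) ^ (a + b) := Real.rpow_pos_of_pos hl' _
    have hmul : (l:ℝ) ^ a * (l:ℝ) ^ b = (l:ℝ) ^ (a + b) := (Real.rpow_add hl' a b).symm
    simp only [hfa, hfb, hfc]
    field_simp
    rw [← hmul]
    ring
  refine Filter.EventuallyEq.trans_isBigO hev ?_
  have h1 : (fun l : ℕ => (fa l - 1) * fb l) =O[atTop] fun l : ℕ => 1/(l:ℝ) := by
    have := hA.mul (hfbt.isBigO_one ℝ)
    simpa using this
  have h2 : (fun l : ℕ => (fa l - 1) * fb l + (fb l - 1) - (fc l - 1)) =O[atTop]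
      fun l : ℕ => 1/(l:ℝ) := (h1.add hB).sub hC
  have := h2.mul (hinvt.isBigO_one ℝ)
  simpa using this

lemma t_eq {a b : ℝ} (ha : 0 < a) (hb : 0 < b) (l : ℕ) (hl : 1 ≤ l) :
    Gamma (a + l) * Gamma (b + l) / (Gamma (a + b + 2 + l) * Gamma (1 + l))
      = (Gamma ((l:ℝ) + a) * Gamma ((l:ℝ) + b) / (Gamma (l:ℝ) * Gamma ((l:ℝ) + (a + b))))
        / ((l:ℝ) * ((l:ℝ) + a + b) * ((l:ℝ) + a + b + 1)) := by
  have hl' : (0:ℝ) < (l:ℝ) := by exact_mod_cast hl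
  have hΓl : 0 < Gamma (l:ℝ) := Gamma_pos_of_pos hl'
  have hΓc : 0 < Gamma ((l:ℝ) + (a + b)) := Gamma_pos_of_pos (by linarith)
  have h1 : Gamma (a + b + 2 + (l:ℝ)) =
      ((l:ℝ) + a + b + 1) * (((l:ℝ) + a + b) * Gamma ((l:ℝ) + (a + b))) := by
    rw [show a + b + 2 + (l:ℝ) = ((l:ℝ) + (a + b) + 1) + 1 by ring,
      Real.Gamma_add_one (by linarith : (l:ℝ) + (a + b) + 1 ≠ 0),
      Real.Gamma_add_one (by linarith : (l:ℝ) + (a + b) ≠ 0)]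
    ring_nf
  have h2 : Gamma (1 + (l:ℝ)) = (l:ℝ) * Gamma (l:ℝ) := by
    rw [show (1:ℝ) + (l:ℝ) = (l:ℝ) + 1 by ring, Real.Gamma_add_one hl'.ne']
  rw [h1, h2, show a + (l:ℝ) = (l:ℝ) + a by ring, show b + (l:ℝ) = (l:ℝ) + b by ring]
  field_simp

lemma closed_form {a b : ℝ} (ha : 0 < a) (hb : 0 < b) (m : ℕ) :
    ∑ l ∈ Finset.range m,
        Gamma (a + l) * Gamma (b + l) / (Gamma (a + b + 2 + l) * Gamma (1 + l))
      = (m:ℝ) * ((m:ℝ) + a + b + 1) * ((m:ℝ) + a + b + a * b)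
          * (Gamma (a + m) * Gamma (b + m) / (Gamma (a + b + 2 + m) * Gamma (1 + m)))
          / (a * b * (a + 1) * (b + 1)) := by
  induction m with
  | zero => simp
  | succ m ih =>
    rw [Finset.sum_range_succ, ih]
    have hΓa : 0 < Gamma (a + m) := Gamma_pos_of_pos (by positivity)
    have hΓb : 0 < Gamma (b + m) := Gamma_pos_of_pos (by positivity)
    have hΓc : 0 < Gamma (a + b + 2 + m) := Gamma_pos_of_pos (by positivity)
    have hΓd : 0 < Gamma (1 + m) := Gamma_pos_of_pos (by positivity)
    have hra : Gamma (a + (m + 1 : ℕ)) = (a + m) * Gamma (a + m) := by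
      push_cast
      rw [show a + ((m:ℝ) + 1) = (a + m) + 1 by ring,
        Real.Gamma_add_one (by positivity : a + (m:ℝ) ≠ 0)]
    have hrb : Gamma (b + (m + 1 : ℕ)) = (b + m) * Gamma (b + m) := by
      push_cast
      rw [show b + ((m:ℝ) + 1) = (b + m) + 1 by ring,
        Real.Gamma_add_one (by positivity : b + (m:ℝ) ≠ 0)]
    have hrc : Gamma (a + b + 2 + (m + 1 : ℕ)) = (a + b + 2 + m) * Gamma (a + b + 2 + m) := by
      push_cast
      rw [show a + b + 2 + ((m:ℝ) + 1) = (a + b + 2 + m) + 1 by ring,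
        Real.Gamma_add_one (by positivity : a + b + 2 + (m:ℝ) ≠ 0)]
    have hrd : Gamma (1 + (m + 1 : ℕ)) = (1 + m) * Gamma (1 + m) := by
      push_cast
      rw [show (1:ℝ) + ((m:ℝ) + 1) = (1 + m) + 1 by ring,
        Real.Gamma_add_one (by positivity : (1:ℝ) + (m:ℝ) ≠ 0)]
    rw [hra, hrb, hrc, hrd]
    push_cast
    field_simp
    ring

lemma q_tendsto {a b : ℝ} (ha : 0 < a) (hb : 0 < b) :
    Tendsto (fun l : ℕ => Gamma ((l:ℝ) + a) * Gamma ((l:ℝ) + b)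
        / (Gamma (l:ℝ) * Gamma ((l:ℝ) + (a + b)))) atTop (𝓝 1) := by
  have h := (q_isBigO ha hb).trans_tendsto tendsto_one_div_atTop_nhds_zero_nat
  have := h.add_const 1
  simpa using this

lemma sum_tendsto {a b : ℝ} (ha : 0 < a) (hb : 0 < b) :
    Tendsto (fun m : ℕ => ∑ l ∈ Finset.range m,
        Gamma (a + l) * Gamma (b + l) / (Gamma (a + b + 2 + l) * Gamma (1 + l)))
      atTop (𝓝 (1 / (a * b * (a + 1) * (b + 1)))) := by
  have hq := q_tendsto ha hb
  have hden : Tendsto (fun m : ℕ => (m:ℝ) + a + b) atTop atTop := by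
    apply tendsto_atTop_add_const_right
    apply tendsto_atTop_add_const_right
    exact tendsto_natCast_atTop_atTop
  have hr : Tendsto (fun m : ℕ => ((m:ℝ) + a + b + a * b) / ((m:ℝ) + a + b)) atTop (𝓝 1) := by
    have h0 : Tendsto (fun m : ℕ => 1 + (a * b) / ((m:ℝ) + a + b)) atTop (𝓝 (1 + a * b * 0)) := by
      exact (((hden.inv_tendsto_atTop).const_mul (a * b)).const_add 1)
    rw [show (1:ℝ) + a * b * 0 = 1 by ring] at h0
    apply h0.congr'
    filter_upwards [eventually_ge_atTop 1] with m hm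
    have hm' : (0:ℝ) < (m:ℝ) := by exact_mod_cast hm
    have : (m:ℝ) + a + b ≠ 0 := by positivity
    field_simp
  have key : Tendsto (fun m : ℕ =>
      (Gamma ((m:ℝ) + a) * Gamma ((m:ℝ) + b) / (Gamma (m:ℝ) * Gamma ((m:ℝ) + (a + b))))
        * (((m:ℝ) + a + b + a * b) / ((m:ℝ) + a + b)) * (1 / (a * b * (a + 1) * (b + 1))))
      atTop (𝓝 (1 * 1 * (1 / (a * b * (a + 1) * (b + 1))))) :=
    (hq.mul hr).mul_const _
  rw [show (1:ℝ) * 1 * (1 / (a * b * (a + 1) * (b + 1))) = 1 / (a * b * (a + 1) * (b + 1)) by ring]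
    at key
  apply key.congr'
  filter_upwards [eventually_ge_atTop 1] with m hm
  have hm' : (0:ℝ) < (m:ℝ) := by exact_mod_cast hm
  rw [closed_form ha hb m, t_eq ha hb m hm]
  have h1 : ((m:ℝ) + a + b) ≠ 0 := by positivity
  have h2 : ((m:ℝ) + a + b + 1) ≠ 0 := by positivity
  have hD : a * b * (a + 1) * (b + 1) ≠ 0 := by positivity
  field_simp

lemma p3_sum (m M : ℕ) (hm : 1 ≤ m) (h : m ≤ M) :
    ∑ l ∈ Finset.Ico m M, 1 / ((l:ℝ) * ((l:ℝ) + 1) * ((l:ℝ) + 2))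
      = 1 / (2 * m * ((m:ℝ) + 1)) - 1 / (2 * M * ((M:ℝ) + 1)) := by
  induction M, h using Nat.le_induction with
  | base => simp
  | succ M hmM ih =>
    rw [Finset.sum_Ico_succ_top hmM, ih]
    have hM' : (0:ℝ) < (M:ℝ) := by
      have : (1:ℝ) ≤ (M:ℝ) := by exact_mod_cast le_trans hm hmM
      linarith
    push_cast
    field_simp
    ring

lemma p4_sum (m M : ℕ) (hm : 1 ≤ m) (h : m ≤ M) :
    ∑ l ∈ Finset.Ico m M, 1 / ((l:ℝ) * ((l:ℝ) + 1) * ((l:ℝ) + 2) * ((l:ℝ) + 3))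
      = 1 / (3 * m * ((m:ℝ) + 1) * ((m:ℝ) + 2)) - 1 / (3 * M * ((M:ℝ) + 1) * ((M:ℝ) + 2)) := by
  induction M, h using Nat.le_induction with
  | base => simp
  | succ M hmM ih =>
    rw [Finset.sum_Ico_succ_top hmM, ih]
    have hM' : (0:ℝ) < (M:ℝ) := by
      have : (1:ℝ) ≤ (M:ℝ) := by exact_mod_cast le_trans hm hmM
      linarith
    push_cast
    field_simp
    ring

set_option maxHeartbeats 1000000 in

lemma real_diff_bound (σ q C0 x : ℝ) (hσ : 0 < σ) (hx : 1 ≤ x) (hC0 : 0 ≤ C0)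
    (hq : |q - 1| ≤ C0 / x) :
    |q / (x * (x + σ) * (x + σ + 1)) - 1 / (x * (x + 1) * (x + 2))|
      ≤ (24 * (C0 + (4 + 3 * σ + σ ^ 2))) * (1 / (x * (x + 1) * (x + 2) * (x + 3))) := by
  have hx0 : (0:ℝ) < x := by linarith
  set d1 := x * (x + σ) * (x + σ + 1) with hd1def
  set d2 := x * (x + 1) * (x + 2) with hd2def
  have hd1 : 0 < d1 := by rw [hd1def]; positivity
  have hd2 : 0 < d2 := by rw [hd2def]; positivity
  have hd4 : 0 < x * (x + 1) * (x + 2) * (x + 3) := by positivity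
  have hx4 : (0:ℝ) < x ^ 4 := by positivity
  set K := 4 + 3 * σ + σ ^ 2 with hKdef
  have hK : 0 ≤ K := by rw [hKdef]; positivity
  have hd1x3 : x ^ 3 ≤ d1 := by
    have e : d1 - x ^ 3 = x * ((2 * σ + 1) * x + (σ ^ 2 + σ)) := by rw [hd1def]; ring
    nlinarith [mul_nonneg hx0.le (by positivity : (0:ℝ) ≤ (2 * σ + 1) * x + (σ ^ 2 + σ))]
  have hd2x3 : x ^ 3 ≤ d2 := by
    have e : d2 - x ^ 3 = x * (3 * x + 2) := by rw [hd2def]; ring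
    nlinarith [mul_nonneg hx0.le (by positivity : (0:ℝ) ≤ 3 * x + 2)]
  have hsplit : q / d1 - 1 / d2 = (q - 1) / d1 + (d2 - d1) / (d1 * d2) := by
    field_simp
    ring
  rw [hsplit]
  have key1 : |(q - 1) / d1| ≤ C0 / x ^ 4 := by
    rw [abs_div, abs_of_pos hd1]
    have h1 : |q - 1| / d1 ≤ (C0 / x) / d1 := by gcongr
    refine h1.trans ?_
    rw [div_div, div_le_div_iff₀ (by positivity) hx4]
    have aux : x ^ 4 ≤ x * d1 := by nlinarith [hd1x3]
    exact mul_le_mul_of_nonneg_left aux hC0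
  have key2 : |(d2 - d1) / (d1 * d2)| ≤ K / x ^ 4 := by
    rw [abs_div, abs_of_pos (by positivity : (0:ℝ) < d1 * d2)]
    have hnum : |d2 - d1| ≤ K * x ^ 2 := by
      rw [abs_le]
      have hx2 : (0:ℝ) < x ^ 2 := by positivity
      constructor
      · have e : K * x ^ 2 - (d1 - d2) = x * ((6 + σ + σ ^ 2) * x - (σ ^ 2 + σ - 2)) := by
          rw [hd1def, hd2def, hKdef]; ring
        have f : σ ^ 2 + σ - 2 ≤ (6 + σ + σ ^ 2) * x := by nlinarith
        nlinarith [mul_nonneg hx0.le (by linarith : (0:ℝ) ≤ (6 + σ + σ ^ 2) * x - (σ ^ 2 + σ - 2))]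
      · have e : K * x ^ 2 - (d2 - d1) = x * ((2 + 5 * σ + σ ^ 2) * x - (2 - σ ^ 2 - σ)) := by
          rw [hd1def, hd2def, hKdef]; ring
        have f : 2 - σ ^ 2 - σ ≤ (2 + 5 * σ + σ ^ 2) * x := by nlinarith
        nlinarith [mul_nonneg hx0.le (by linarith : (0:ℝ) ≤ (2 + 5 * σ + σ ^ 2) * x - (2 - σ ^ 2 - σ))]
    have hden : x ^ 6 ≤ d1 * d2 := by
      calc x ^ 6 = x ^ 3 * x ^ 3 := by ring
        _ ≤ d1 * d2 := mul_le_mul hd1x3 hd2x3 (by positivity) hd1.le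
    calc |d2 - d1| / (d1 * d2) ≤ (K * x ^ 2) / x ^ 6 := by
          apply div_le_div₀ (by positivity) hnum (by positivity) hden
      _ = K / x ^ 4 := by
          field_simp
  calc |(q - 1) / d1 + (d2 - d1) / (d1 * d2)|
      ≤ |(q - 1) / d1| + |(d2 - d1) / (d1 * d2)| := abs_add_le _ _
    _ ≤ C0 / x ^ 4 + K / x ^ 4 := add_le_add key1 key2
    _ = (C0 + K) / x ^ 4 := by ring
    _ ≤ (24 * (C0 + K)) * (1 / (x * (x + 1) * (x + 2) * (x + 3))) := by
        rw [mul_one_div, div_le_div_iff₀ hx4 hd4]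
        have h1 : x + 1 ≤ 2 * x := by linarith
        have h2 : x + 2 ≤ 3 * x := by linarith
        have h3 : x + 3 ≤ 4 * x := by linarith
        have s1 : x * (x + 1) ≤ 2 * x ^ 2 := by nlinarith
        have s2 : x * (x + 1) * (x + 2) ≤ 6 * x ^ 3 := by
          nlinarith [mul_le_mul s1 h2 (by linarith : (0:ℝ) ≤ x + 2)
            (by positivity : (0:ℝ) ≤ 2 * x ^ 2)]
        have haux2 : x * (x + 1) * (x + 2) * (x + 3) ≤ 24 * x ^ 4 := by
          nlinarith [mul_le_mul s2 h3 (by linarith : (0:ℝ) ≤ x + 3)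
            (by positivity : (0:ℝ) ≤ 6 * x ^ 3)]
        calc (C0 + K) * (x * (x + 1) * (x + 2) * (x + 3)) ≤ (C0 + K) * (24 * x ^ 4) :=
              mul_le_mul_of_nonneg_left haux2 (by positivity)
          _ = 24 * (C0 + K) * x ^ 4 := by ring

lemma tail_bound {a b : ℝ} (ha : 0 < a) (hb : 0 < b) :
    ∃ C : ℝ, 0 ≤ C ∧ ∃ L : ℕ, 1 ≤ L ∧ ∀ m : ℕ, L ≤ m →
      |1 / (a * b * (a + 1) * (b + 1))
          - (∑ l ∈ Finset.range m,
              Gamma (a + l) * Gamma (b + l) / (Gamma (a + b + 2 + l) * Gamma (1 + l)))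
          - 1 / (2 * (m:ℝ) * ((m:ℝ) + 1))| ≤ C / (m:ℝ) ^ 3 := by
  obtain ⟨c, hc⟩ := isBigO_iff.1 (q_isBigO ha hb)
  obtain ⟨L0, hL0⟩ := eventually_atTop.1 hc
  set σ := a + b with hσdef
  have hσ : 0 < σ := by rw [hσdef]; linarith
  set C0 := max c 0 with hC0def
  have hC0 : 0 ≤ C0 := le_max_right _ _
  set C1 := 24 * (C0 + (4 + 3 * σ + σ ^ 2)) with hC1def
  have hC1 : 0 ≤ C1 := by rw [hC1def]; positivity
  set T := fun l : ℕ =>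
    Gamma (a + l) * Gamma (b + l) / (Gamma (a + b + 2 + l) * Gamma (1 + l)) with hT
  set p3 := fun l : ℕ => 1 / ((l:ℝ) * ((l:ℝ) + 1) * ((l:ℝ) + 2)) with hp3
  set p4 := fun l : ℕ => 1 / ((l:ℝ) * ((l:ℝ) + 1) * ((l:ℝ) + 2) * ((l:ℝ) + 3)) with hp4
  set L : ℕ := max L0 1 with hLdef
  refine ⟨C1, hC1, L, le_max_right _ _, fun m hm => ?_⟩
  have hm1 : 1 ≤ m := le_trans (le_max_right L0 1) hm
  have hm1' : (1:ℝ) ≤ (m:ℝ) := by exact_mod_cast hm1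
  have hm0' : (0:ℝ) < (m:ℝ) := by linarith
  -- per-term bound
  have hterm : ∀ l : ℕ, L ≤ l → |T l - p3 l| ≤ C1 * p4 l := by
    intro l hl
    have hl1 : 1 ≤ l := le_trans (le_max_right L0 1) hl
    have hl1' : (1:ℝ) ≤ (l:ℝ) := by exact_mod_cast hl1
    have hl0' : (0:ℝ) < (l:ℝ) := by linarith
    set q := Gamma ((l:ℝ) + a) * Gamma ((l:ℝ) + b)
      / (Gamma (l:ℝ) * Gamma ((l:ℝ) + (a + b))) with hqdef
    have hqb : |q - 1| ≤ C0 / (l:ℝ) := by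
      have h1 := hL0 l (le_trans (le_max_left L0 1) hl)
      rw [Real.norm_eq_abs, Real.norm_eq_abs, abs_of_pos (by positivity : (0:ℝ) < 1/(l:ℝ))] at h1
      calc |q - 1| ≤ c * (1 / (l:ℝ)) := h1
        _ ≤ C0 * (1 / (l:ℝ)) := mul_le_mul_of_nonneg_right (le_max_left _ _) (by positivity)
        _ = C0 / (l:ℝ) := by ring
    have hTl : T l = q / ((l:ℝ) * ((l:ℝ) + σ) * ((l:ℝ) + σ + 1)) := by
      rw [hT, hqdef]
      simp only []
      rw [t_eq ha hb l hl1, hσdef]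
      ring_nf
    have := real_diff_bound σ q C0 (l:ℝ) hσ hl1' hC0 hqb
    rw [hTl, hp3, hp4, hC1def]
    simpa using this
  -- sum bound for all M ≥ m
  have hsum : ∀ M : ℕ, m ≤ M →
      |∑ l ∈ Finset.Ico m M, T l - ∑ l ∈ Finset.Ico m M, p3 l| ≤ C1 / (m:ℝ) ^ 3 := by
    intro M hM
    have h1 : |∑ l ∈ Finset.Ico m M, T l - ∑ l ∈ Finset.Ico m M, p3 l|
        ≤ ∑ l ∈ Finset.Ico m M, |T l - p3 l| := by
      rw [← Finset.sum_sub_distrib]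
      exact Finset.abs_sum_le_sum_abs _ _
    have h2 : ∑ l ∈ Finset.Ico m M, |T l - p3 l| ≤ ∑ l ∈ Finset.Ico m M, C1 * p4 l := by
      apply Finset.sum_le_sum
      intro l hl
      exact hterm l (le_trans hm (Finset.mem_Ico.1 hl).1)
    have h3 : ∑ l ∈ Finset.Ico m M, C1 * p4 l
        = C1 * (1 / (3 * m * ((m:ℝ) + 1) * ((m:ℝ) + 2))
            - 1 / (3 * M * ((M:ℝ) + 1) * ((M:ℝ) + 2))) := by
      rw [← Finset.mul_sum, p4_sum m M hm1 hM]
    have hM4 : (0:ℝ) ≤ 1 / (3 * M * ((M:ℝ) + 1) * ((M:ℝ) + 2)) := by positivity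
    have h4 : C1 * (1 / (3 * m * ((m:ℝ) + 1) * ((m:ℝ) + 2))
            - 1 / (3 * M * ((M:ℝ) + 1) * ((M:ℝ) + 2)))
        ≤ C1 * (1 / (3 * m * ((m:ℝ) + 1) * ((m:ℝ) + 2))) :=
      mul_le_mul_of_nonneg_left (by linarith) hC1
    have h5 : C1 * (1 / (3 * m * ((m:ℝ) + 1) * ((m:ℝ) + 2))) ≤ C1 / (m:ℝ) ^ 3 := by
      rw [mul_one_div]
      apply div_le_div_of_nonneg_left ?_ (by positivity) ?_
      · exact hC1
      · nlinarith [mul_nonneg (mul_nonneg hm0'.le hm0'.le) hm0'.le, sq_nonneg ((m:ℝ)), hm0'.le]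
    linarith [h1, h2, h3.le, h3.ge]
  -- take limit M → ∞
  have hTlim : Tendsto (fun M : ℕ => ∑ l ∈ Finset.Ico m M, T l) atTop
      (𝓝 (1 / (a * b * (a + 1) * (b + 1)) - ∑ l ∈ Finset.range m, T l)) := by
    have h1 := (sum_tendsto ha hb).sub_const (∑ l ∈ Finset.range m, T l)
    apply h1.congr'
    filter_upwards [eventually_ge_atTop m] with M hM
    rw [Finset.sum_Ico_eq_sub _ hM]
  have hplim : Tendsto (fun M : ℕ => ∑ l ∈ Finset.Ico m M, p3 l) atTop
      (𝓝 (1 / (2 * (m:ℝ) * ((m:ℝ) + 1)))) := by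
    have h0 : Tendsto (fun M : ℕ => 1 / (2 * (M:ℝ) * ((M:ℝ) + 1))) atTop (𝓝 0) := by
      apply squeeze_zero' (g := fun M : ℕ => 1 / (M:ℝ))
      · filter_upwards [eventually_ge_atTop 1] with M hM
        positivity
      · filter_upwards [eventually_ge_atTop 1] with M hM
        have hM' : (1:ℝ) ≤ (M:ℝ) := by exact_mod_cast hM
        apply div_le_div_of_nonneg_left one_pos.le (by linarith) (by nlinarith)
      · exact tendsto_one_div_atTop_nhds_zero_nat
    have h1 := (tendsto_const_nhds (x := 1 / (2 * (m:ℝ) * ((m:ℝ) + 1)))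
      (f := atTop (α := ℕ))).sub h0
    rw [sub_zero] at h1
    apply h1.congr'
    filter_upwards [eventually_ge_atTop m] with M hM
    rw [p3_sum m M hm1 hM]
  have hdiff : Tendsto (fun M : ℕ => |∑ l ∈ Finset.Ico m M, T l - ∑ l ∈ Finset.Ico m M, p3 l|)
      atTop (𝓝 (|1 / (a * b * (a + 1) * (b + 1)) - ∑ l ∈ Finset.range m, T l
        - 1 / (2 * (m:ℝ) * ((m:ℝ) + 1))|)) := (hTlim.sub hplim).abs
  apply le_of_tendsto hdiff
  filter_upwards [eventually_ge_atTop m] with M hM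
  exact hsum M hM

lemma err2 (x : ℝ) (hx : 4 ≤ x) :
    |1 / 2 * (1 / ((x - 1) * (x - 2))) - 1 / (2 * x * (x + 1))| ≤ 8 / x ^ 3 := by
  have h1 : (0:ℝ) < x - 1 := by linarith
  have h2 : (0:ℝ) < x - 2 := by linarith
  have hx0 : (0:ℝ) < x := by linarith
  have e : 1 / 2 * (1 / ((x - 1) * (x - 2))) - 1 / (2 * x * (x + 1))
      = (4 * x - 2) / (2 * ((x - 1) * (x - 2) * x * (x + 1))) := by
    field_simp
    ring
  rw [e, abs_of_pos (div_pos (by linarith) (by positivity))]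
  rw [div_le_div_iff₀ (by positivity) (by positivity)]
  nlinarith [mul_nonneg (mul_nonneg (mul_nonneg hx0.le hx0.le) hx0.le)
      (by linarith : (0:ℝ) ≤ x - 4),
    mul_nonneg (mul_nonneg hx0.le hx0.le) (by linarith : (0:ℝ) ≤ x - 4),
    sq_nonneg x, hx0.le]

theorem s_eq_two_partial_sums (a₁ a₂ : ℝ) (ha₁ : 0 < a₁) (ha₂ : 0 < a₂) :
    (fun m : ℕ =>
        (∑ l ∈ Finset.range m,
          Gamma (a₁ + l) * Gamma (a₂ + l) / (Gamma (a₁ + a₂ + 2 + l) * Gamma (1 + l)))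
        - (1 / (a₁ * (a₁ + 1) * a₂ * (a₂ + 1))
            - (1 / 2) * (1 / (((m : ℝ) - 1) * ((m : ℝ) - 2)))))
      =O[atTop] fun m : ℕ => (m : ℝ) ^ (-3 : ℝ) := by
  obtain ⟨C, hC, L, hL1, hbound⟩ := tail_bound ha₁ ha₂
  rw [isBigO_iff]
  refine ⟨C + 8, ?_⟩
  filter_upwards [eventually_ge_atTop (max L 4)] with m hm
  have hmL : L ≤ m := le_trans (le_max_left _ _) hm
  have hm4 : 4 ≤ m := le_trans (le_max_right _ _) hm
  have hx4 : (4:ℝ) ≤ (m:ℝ) := by exact_mod_cast hm4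
  have hm0 : (0:ℝ) < (m:ℝ) := by linarith
  have hnorm : ‖(m:ℝ) ^ (-3:ℝ)‖ = 1 / (m:ℝ) ^ 3 := by
    rw [show ((-3):ℝ) = -((3:ℕ):ℝ) by norm_num, Real.rpow_neg (Nat.cast_nonneg m),
      Real.rpow_natCast, Real.norm_eq_abs, abs_of_pos (by positivity)]
    rw [one_div]
  rw [hnorm, Real.norm_eq_abs]
  have hA : 1 / (a₁ * (a₁ + 1) * a₂ * (a₂ + 1)) = 1 / (a₁ * a₂ * (a₁ + 1) * (a₂ + 1)) := by
    rw [show a₁ * (a₁ + 1) * a₂ * (a₂ + 1) = a₁ * a₂ * (a₁ + 1) * (a₂ + 1) by ring]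
  rw [hA]
  set S := 1 / (a₁ * a₂ * (a₁ + 1) * (a₂ + 1)) with hS
  set Sm := ∑ l ∈ Finset.range m,
    Gamma (a₁ + l) * Gamma (a₂ + l) / (Gamma (a₁ + a₂ + 2 + l) * Gamma (1 + l)) with hSm
  have h1 := hbound m hmL
  have h2 := err2 (m:ℝ) hx4
  have hid : Sm - (S - 1 / 2 * (1 / (((m:ℝ) - 1) * ((m:ℝ) - 2))))
      = -(S - Sm - 1 / (2 * (m:ℝ) * ((m:ℝ) + 1)))
        + (1 / 2 * (1 / (((m:ℝ) - 1) * ((m:ℝ) - 2))) - 1 / (2 * (m:ℝ) * ((m:ℝ) + 1))) := by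
    ring
  rw [hid]
  calc |(-(S - Sm - 1 / (2 * (m:ℝ) * ((m:ℝ) + 1))))
        + (1 / 2 * (1 / (((m:ℝ) - 1) * ((m:ℝ) - 2))) - 1 / (2 * (m:ℝ) * ((m:ℝ) + 1)))|
      ≤ |S - Sm - 1 / (2 * (m:ℝ) * ((m:ℝ) + 1))|
        + |1 / 2 * (1 / (((m:ℝ) - 1) * ((m:ℝ) - 2))) - 1 / (2 * (m:ℝ) * ((m:ℝ) + 1))| := by
        rw [← abs_neg (S - Sm - 1 / (2 * (m:ℝ) * ((m:ℝ) + 1)))]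
        exact abs_add_le _ _
    _ ≤ C / (m:ℝ) ^ 3 + 8 / (m:ℝ) ^ 3 := add_le_add h1 h2
    _ = (C + 8) * (1 / (m:ℝ) ^ 3) := by ring
end

section
/- For every complex x with x ∉ {0, −1, −2, …} and every natural number l > n, the Taylor coefficient c_l^{(n)} of (1−z)^n ln(1−z) = ∑_{l≥1} c_l^{(n)} z^l satisfies c_l^{(n)} = −(1/l)·(−1)^n·Γ(1+n)Γ(l−n)/Γ(l) = −(1/l)·(−1)^n·n!/((l−1)(l−2)⋯(l−n)). -/
/-!
Substituting `w = 1 - z` reduces everything to `w ^ n * log w` at `w = 1`. Differentiating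
`w ^ (n + 1) * log w` gives `(n + 1) * w ^ n * log w + w ^ n`, and the polynomial term dies after
`n + 1` further derivatives, so by induction the `(n + 1)`-st derivative of `w ^ n * log w` is
`n! / w`. The remaining `l - n - 1` derivatives of `1 / w` give `(l - n - 1)!` up to sign, and the
Gamma values are factorials.
-/

/-- The l-th Taylor coefficient about 0 of (1-z)^n · ln(1-z). -/
noncomputable def cCoeff (n l : ℕ) : ℝ :=
  iteratedDeriv l (fun z : ℝ => (1 - z) ^ n * Real.log (1 - z)) 0 / Nat.factorial l

open Real Set
open scoped Nat

theorem iteratedDeriv_succ_pow_mul_log (n : ℕ) {w : ℝ} (hw : 0 < w) :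
    iteratedDeriv (n + 1) (fun w => w ^ n * log w) w = n ! * w⁻¹ := by
  induction n generalizing w with
  | zero => simp [Real.deriv_log]
  | succ n ih =>
    have hderiv : EqOn (deriv fun w => w ^ (n + 1) * log w)
        (fun w => (n + 1) * (w ^ n * log w) + w ^ n) (Ioi 0) := by
      intro x (hx : 0 < x)
      rw [deriv_fun_mul (by fun_prop) (differentiableAt_log hx.ne'), Real.deriv_log]
      simp only [deriv_pow_field]
      field_simp
      push_cast
      ring
    have hsmooth : ContDiffAt ℝ (n + 1) (fun w => (n + 1) * (w ^ n * log w)) w :=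
      contDiffAt_const.mul ((contDiffAt_id.pow n).mul (contDiffAt_log.2 hw.ne'))
    rw [iteratedDeriv_succ', hderiv.iteratedDeriv_of_isOpen isOpen_Ioi _ hw,
      iteratedDeriv_fun_add hsmooth (by fun_prop), iteratedDeriv_const_mul_field, ih hw,
      iteratedDeriv_pow]
    beta_reduce
    rw [Nat.descFactorial_of_lt (Nat.lt_add_one n), Nat.factorial_succ]
    push_cast
    ring

theorem iteratedDeriv_add_succ_pow_mul_log (n k : ℕ) {w : ℝ} (hw : 0 < w) :
    iteratedDeriv (k + (n + 1)) (fun w => w ^ n * log w) w =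
      n ! * ((-1) ^ k * k ! * w ^ (-1 - k : ℤ)) := by
  have hsucc :
      EqOn (iteratedDeriv (n + 1) fun w => w ^ n * log w) (fun w => n ! * w⁻¹) (Ioi 0) :=
    fun x hx => iteratedDeriv_succ_pow_mul_log n hx
  rw [iteratedDeriv_eq_iterate, Function.iterate_add_apply, ← iteratedDeriv_eq_iterate,
    ← iteratedDeriv_eq_iterate, hsucc.iteratedDeriv_of_isOpen isOpen_Ioi k hw,
    iteratedDeriv_const_mul_field, iteratedDeriv_eq_iterate, iter_deriv_inv]

theorem iteratedDeriv_one_sub_pow_mul_log_zero (n k : ℕ) :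
    iteratedDeriv (k + (n + 1)) (fun z => (1 - z) ^ n * log (1 - z)) 0 =
      -((-1) ^ n * n ! * k !) := by
  rw [iteratedDeriv_comp_const_sub (k + (n + 1)) (fun w => w ^ n * log w)]
  dsimp only
  rw [sub_zero, iteratedDeriv_add_succ_pow_mul_log n k one_pos]
  have hsq : ((-1 : ℝ) ^ k) ^ 2 = 1 := by rw [← pow_mul, pow_mul']; norm_num
  rw [one_zpow, smul_eq_mul, pow_add, pow_succ]
  linear_combination (-(n ! * k ! * (-1) ^ n : ℝ)) * hsq

theorem taylor_coeff_formula_general (n l : ℕ) (h : n < l) :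
    cCoeff n l =
      -(1 / l) * (-1) ^ n * Gamma (1 + n) * Gamma ((l : ℝ) - n) / Gamma l := by
  obtain ⟨k, rfl⟩ : ∃ k, l = k + (n + 1) := ⟨l - (n + 1), by omega⟩
  have hGamma_n : Gamma (1 + n) = n ! := by
    rw [add_comm, Gamma_nat_eq_factorial]
  have hGamma_k : Gamma (((k + (n + 1) : ℕ) : ℝ) - n) = k ! := by
    rw [show ((k + (n + 1) : ℕ) : ℝ) - n = k + 1 by push_cast; ring, Gamma_nat_eq_factorial]
  have hGamma_l : Gamma ((k + (n + 1) : ℕ) : ℝ) = (k + n) ! := by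
    rw [show k + (n + 1) = (k + n) + 1 by ring, Nat.cast_succ, Gamma_nat_eq_factorial]
  rw [cCoeff, iteratedDeriv_one_sub_pow_mul_log_zero, hGamma_n, hGamma_k, hGamma_l,
    show k + (n + 1) = (k + n) + 1 by ring, Nat.factorial_succ]
  push_cast
  field_simp

theorem taylor_coeff_formula (x : ℂ) (hx : ∀ k : ℕ, x ≠ -(k : ℂ)) (n l : ℕ) (h : n < l) :
    cCoeff n l =
      -(1 / l) * (-1) ^ n * Gamma (1 + n) * Gamma ((l : ℝ) - n) / Gamma l :=
  taylor_coeff_formula_general n l h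
end

section
/- Let a₁, a₂, a₃, b₁, b₂ be positive reals with s := b₁ + b₂ − a₁ − a₂ − a₃ > 0. Then the partial sums ∑_{l=0}^{m−1} Γ(a₁+l)Γ(a₂+l)Γ(a₃+l)/(Γ(b₁+l)Γ(b₂+l)Γ(1+l)) converge as m → ∞ to the limit Γ(a₁)Γ(a₂)Γ(s)/(Γ(a₁+s)Γ(a₂+s)) · ∑_{k=0}^{∞} (s)_k·(b₂−a₃)_k·(b₁−a₃)_k / ((a₁+s)_k·(a₂+s)_k·k!), and the error after m terms is O(m^{−s}). -/
/-!
Gauss's summation theorem `₂F₁(a, b; c; 1) = Γ(c) Γ(c - a - b) / (Γ(c - a) Γ(c - b))` with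
`(a, b, c) = (b₁ - a₃, b₂ - a₃, b₁ + b₂ - a₃ + l)` writes the `l`-th term of the partial sums as
`(a₁)ₗ (a₂)ₗ / ((b₁ + b₂ - a₃)ₗ l!)` times a `₂F₁` at `1`. This turns the series into the
double series `∑ (a₁)ₗ (a₂)ₗ (b₁ - a₃)ₖ (b₂ - a₃)ₖ / ((b₁ + b₂ - a₃)ₗ₊ₖ l! k!)`, which converges
absolutely; summing it over `l` first and applying Gauss once more gives the limit. The terms are
`O(l^(-1-s))` by Euler's limit formula for `Γ`, so the tails are `O(m^(-s))`.

Gauss's theorem itself comes from the contiguous relation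
`c (c - a - b) ₂F₁(c) = (c - a) (c - b) ₂F₁(c + 1)`, which makes
`₂F₁(c) Γ(c - a) Γ(c - b) / (Γ(c) Γ(c - a - b))` invariant under `c ↦ c + 1`, while
`₂F₁(c + n) → 1` and the Gamma quotient tends to `1`.
-/

open Real Filter Asymptotics

/-- Pochhammer symbol (rising factorial). -/
noncomputable def poch (x : ℝ) (n : ℕ) : ℝ := ∏ i ∈ Finset.range n, (x + i)

open Topology
open scoped Nat

@[simp]
lemma poch_zero (x : ℝ) : poch x 0 = 1 := by simp [poch]

lemma poch_succ (x : ℝ) (n : ℕ) : poch x (n + 1) = poch x n * (x + n) := by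
  simp [poch, Finset.prod_range_succ]

lemma poch_add (x : ℝ) (m n : ℕ) : poch x (m + n) = poch x m * poch (x + m) n := by
  simp only [poch, Finset.prod_range_add, Nat.cast_add, add_assoc]

lemma poch_succ' (x : ℝ) (n : ℕ) : poch x (n + 1) = x * poch (x + 1) n := by
  rw [add_comm, poch_add]; simp [poch]

lemma poch_pos {x : ℝ} (hx : 0 < x) (n : ℕ) : 0 < poch x n :=
  Finset.prod_pos fun _ _ => by positivity

lemma poch_le_poch {x y : ℝ} (hx : 0 ≤ x) (hxy : x ≤ y) (n : ℕ) : poch x n ≤ poch y n :=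
  Finset.prod_le_prod (fun _ _ => by positivity) fun _ _ => by linarith

lemma poch_one (n : ℕ) : poch 1 n = n ! := by
  induction n with
  | zero => simp
  | succ n ih => rw [poch_succ, ih, Nat.factorial_succ]; push_cast; ring

lemma Gamma_add_nat {x : ℝ} (hx : 0 < x) (n : ℕ) : Gamma (x + n) = Gamma x * poch x n := by
  induction n with
  | zero => simp
  | succ n ih =>
    rw [Nat.cast_succ, ← add_assoc, Gamma_add_one (by positivity), ih, poch_succ]; ring

/-- Euler's limit formula; at the poles of `Γ` both sides vanish. -/
lemma tendsto_poch_succ_div_rpow_mul_factorial (x : ℝ) :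
    Tendsto (fun n : ℕ => poch x (n + 1) / ((n : ℝ) ^ x * n !)) atTop (𝓝 (Gamma x)⁻¹) := by
  have hseq : ∀ n, GammaSeq x n = (n : ℝ) ^ x * n ! / poch x (n + 1) := fun _ => rfl
  by_cases hpole : ∃ m : ℕ, x = -m
  · obtain ⟨m, rfl⟩ := hpole
    rw [Gamma_neg_nat_eq_zero, inv_zero]
    refine tendsto_const_nhds.congr' ?_
    filter_upwards [eventually_ge_atTop m] with n hn
    rw [poch, Finset.prod_eq_zero (i := m) (Finset.mem_range.2 (by omega)) (by simp), zero_div]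
  · push Not at hpole
    refine ((GammaSeq_tendsto_Gamma x).inv₀ (Gamma_ne_zero hpole)).congr fun n => ?_
    rw [hseq, inv_div]

lemma tendsto_poch_div_poch_mul_rpow (x : ℝ) {y : ℝ} (hy : 0 < y) :
    Tendsto (fun n : ℕ => poch x n / poch y n * (n : ℝ) ^ (y - x)) atTop
      (𝓝 (Gamma y / Gamma x)) := by
  -- this factor tends to `1` and trades `(x)ₙ₊₁ / (y)ₙ₊₁` for `(x)ₙ / (y)ₙ`
  have hshift :=
    (tendsto_natCast_div_add_atTop x).div (tendsto_natCast_div_add_atTop y) one_ne_zero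
  rw [div_one] at hshift
  have h := ((tendsto_poch_succ_div_rpow_mul_factorial x).div
    (tendsto_poch_succ_div_rpow_mul_factorial y) (inv_ne_zero (Gamma_pos_of_pos hy).ne')).mul hshift
  rw [inv_div_inv, mul_one] at h
  refine h.congr' ?_
  filter_upwards [eventually_gt_atTop 0,
    (tendsto_atTop_add_const_left _ x tendsto_natCast_atTop_atTop).eventually_gt_atTop 0]
    with n hn hxn
  have hn' : (0 : ℝ) < n := by exact_mod_cast hn
  have := poch_pos hy n
  have : (n : ℝ) + x ≠ 0 := by linarith
  simp only [Pi.div_apply]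
  rw [poch_succ, poch_succ, rpow_sub hn']
  field_simp
  ring

lemma isBigO_rpow_of_tendsto_mul_rpow {f : ℕ → ℝ} {p L : ℝ}
    (h : Tendsto (fun n => f n * (n : ℝ) ^ (-p)) atTop (𝓝 L)) :
    f =O[atTop] fun n => (n : ℝ) ^ p := by
  refine ((h.isBigO_one ℝ).mul (isBigO_refl (fun n : ℕ => (n : ℝ) ^ p) atTop)).congr' ?_ ?_
  · filter_upwards [eventually_gt_atTop 0] with n hn
    rw [mul_assoc, ← rpow_add (by exact_mod_cast hn), neg_add_cancel, rpow_zero, mul_one]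
  · simp

lemma tendsto_Gamma_add_div_Gamma_add_mul_rpow {x y : ℝ} (hx : 0 < x) (hy : 0 < y) :
    Tendsto (fun n : ℕ => Gamma (x + n) / Gamma (y + n) * (n : ℝ) ^ (y - x)) atTop (𝓝 1) := by
  have h := (tendsto_poch_div_poch_mul_rpow x hy).const_mul (Gamma x / Gamma y)
  have := Gamma_pos_of_pos hx
  have := Gamma_pos_of_pos hy
  rw [show Gamma x / Gamma y * (Gamma y / Gamma x) = 1 by field_simp] at h
  refine h.congr fun n => ?_
  have := poch_pos hy n
  rw [Gamma_add_nat hx, Gamma_add_nat hy]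
  field_simp

/-- `hypTerm a b c n` is the `n`-th term of `₂F₁(a, b; c; 1)` and `hypSum a b c` its sum. -/
noncomputable def hypTerm (a b c : ℝ) (n : ℕ) : ℝ := poch a n * poch b n / (poch c n * n !)

noncomputable def hypSum (a b c : ℝ) : ℝ := ∑' n, hypTerm a b c n

section Gauss

variable {a b c : ℝ}

@[simp]
lemma hypTerm_zero : hypTerm a b c 0 = 1 := by simp [hypTerm]

lemma hypTerm_eq_Gamma (ha : 0 < a) (hb : 0 < b) (hc : 0 < c) (n : ℕ) :
    hypTerm a b c n = Gamma c / (Gamma a * Gamma b) *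
      (Gamma (a + n) * Gamma (b + n) / (Gamma (c + n) * Gamma (1 + n))) := by
  have := Gamma_pos_of_pos ha
  have := Gamma_pos_of_pos hb
  have := Gamma_pos_of_pos hc
  have := poch_pos hc n
  rw [hypTerm, Gamma_add_nat ha, Gamma_add_nat hb, Gamma_add_nat hc, add_comm,
    Gamma_nat_eq_factorial]
  field_simp

lemma isBigO_hypTerm (hc : 0 < c) :
    hypTerm a b c =O[atTop] fun n => (n : ℝ) ^ (a + b - c - 1) := by
  refine isBigO_rpow_of_tendsto_mul_rpow
    ((tendsto_poch_div_poch_mul_rpow a hc).mul (tendsto_poch_div_poch_mul_rpow b one_pos)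
      |>.congr' ?_)
  filter_upwards [eventually_gt_atTop 0] with n hn
  have hn' : (0 : ℝ) < n := by exact_mod_cast hn
  rw [hypTerm, poch_one, mul_mul_mul_comm, ← rpow_add hn',
    show c - a + (1 - b) = -(a + b - c - 1) by ring]
  ring

lemma summable_norm_hypTerm (hc : 0 < c) (hs : 0 < c - a - b) :
    Summable fun n => ‖hypTerm a b c n‖ :=
  summable_of_isBigO_nat (summable_nat_rpow.2 (by linarith)) (isBigO_hypTerm hc).norm_left

lemma summable_hypTerm (hc : 0 < c) (hs : 0 < c - a - b) : Summable (hypTerm a b c) :=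
  (summable_norm_hypTerm hc hs).of_norm

lemma tendsto_natCast_mul_hypTerm (hc : 0 < c) (hs : 0 < c - a - b) :
    Tendsto (fun n : ℕ => n * hypTerm a b c n) atTop (𝓝 0) := by
  have h : (fun n : ℕ => n * hypTerm a b c n) =O[atTop] fun n => (n : ℝ) ^ (-(c - a - b)) := by
    refine ((isBigO_refl (fun n : ℕ => (n : ℝ)) atTop).mul (isBigO_hypTerm hc)).congr' .rfl ?_
    filter_upwards [eventually_gt_atTop 0] with n hn
    rw [← rpow_one_add' (by positivity) (by linarith)]
    ring_nf
  exact h.trans_tendsto ((tendsto_rpow_neg_atTop hs).comp tendsto_natCast_atTop_atTop)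

lemma hypTerm_contiguous (hc : 0 < c) (n : ℕ) :
    c * (c - a - b) * hypTerm a b c n - (c - a) * (c - b) * hypTerm a b (c + 1) n
      = c * n * hypTerm a b c n - c * (n + 1) * hypTerm a b c (n + 1) := by
  have := poch_pos hc n
  have : poch (c + 1) n = poch c n * (c + n) / c := by
    rw [eq_div_iff hc.ne', ← poch_succ, poch_succ']; ring
  simp only [hypTerm]
  rw [this, poch_succ a, poch_succ b, poch_succ c, Nat.factorial_succ]
  push_cast
  field_simp
  ring

lemma hypSum_contiguous (hc : 0 < c) (hs : 0 < c - a - b) :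
    c * (c - a - b) * hypSum a b c = (c - a) * (c - b) * hypSum a b (c + 1) := by
  have hpartial : ∀ m : ℕ,
      c * (c - a - b) * ∑ n ∈ Finset.range m, hypTerm a b c n
        - (c - a) * (c - b) * ∑ n ∈ Finset.range m, hypTerm a b (c + 1) n
        = -(c * (m * hypTerm a b c m)) := fun m => by
    rw [Finset.mul_sum, Finset.mul_sum, ← Finset.sum_sub_distrib]
    simp_rw [hypTerm_contiguous hc]
    have := Finset.sum_range_sub' (fun n : ℕ => c * n * hypTerm a b c n) m
    push_cast at this
    rw [this]
    simp [mul_assoc]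
  have h₁ := (summable_hypTerm hc hs).hasSum.tendsto_sum_nat
  have h₂ := (summable_hypTerm (a := a) (b := b) (c := c + 1) (by linarith)
    (by linarith)).hasSum.tendsto_sum_nat
  have hlim := (h₁.const_mul (c * (c - a - b))).sub (h₂.const_mul ((c - a) * (c - b)))
  simp_rw [hpartial] at hlim
  have h0 := ((tendsto_natCast_mul_hypTerm hc hs).const_mul c).neg
  rw [mul_zero, neg_zero] at h0
  exact sub_eq_zero.1 (tendsto_nhds_unique hlim h0)

lemma abs_hypTerm_le {d : ℝ} (hc : 0 < c) (hcd : c ≤ d) {n : ℕ} (hn : n ≠ 0) :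
    |hypTerm a b d n| ≤ c / d * |hypTerm a b c n| := by
  obtain ⟨k, rfl⟩ := Nat.exists_eq_succ_of_ne_zero hn
  have hd : 0 < d := hc.trans_le hcd
  have hPc := poch_pos (by linarith : 0 < c + 1) k
  have hPd := poch_pos (by linarith : 0 < d + 1) k
  have hf : (0 : ℝ) < (k + 1)! := by positivity
  have hrhs : c / d * |hypTerm a b c (k + 1)|
      = |poch a (k + 1) * poch b (k + 1)| / (d * poch (c + 1) k * (k + 1)!) := by
    rw [hypTerm, poch_succ' c, abs_div, abs_of_pos (mul_pos (mul_pos hc hPc) hf)]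
    field_simp
  rw [hrhs, hypTerm, poch_succ' d, abs_div, abs_of_pos (mul_pos (mul_pos hd hPd) hf)]
  gcongr
  exact poch_le_poch (by linarith) (by linarith) k

lemma abs_hypTerm_le_of_le {d : ℝ} (hc : 0 < c) (hcd : c ≤ d) (n : ℕ) :
    |hypTerm a b d n| ≤ |hypTerm a b c n| := by
  rcases eq_or_ne n 0 with rfl | hn
  · simp
  · refine (abs_hypTerm_le hc hcd hn).trans (mul_le_of_le_one_left (abs_nonneg _) ?_)
    exact div_le_one_of_le₀ hcd (hc.trans_le hcd).le

lemma tendsto_hypSum_add_nat (hc : 0 < c) (hs : 0 < c - a - b) :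
    Tendsto (fun n : ℕ => hypSum a b (c + n)) atTop (𝓝 1) := by
  have htail := (summable_nat_add_iff (f := fun k => ‖hypTerm a b c k‖) 1).2
    (summable_norm_hypTerm hc hs)
  have hbound : ∀ n : ℕ, ‖hypSum a b (c + n) - 1‖
      ≤ c / (c + n) * ∑' k, ‖hypTerm a b c (k + 1)‖ := fun n => by
    have hcn : 0 < c + n := by positivity
    have hsum := summable_hypTerm (a := a) (b := b) hcn (by linarith)
    rw [hypSum, hsum.tsum_eq_zero_add, hypTerm_zero, add_sub_cancel_left, ← tsum_mul_left]
    have hnorm := (summable_nat_add_iff (f := fun k => ‖hypTerm a b (c + n) k‖) 1).2 hsum.norm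
    refine (norm_tsum_le_tsum_norm hnorm).trans
      (Summable.tsum_le_tsum (fun k => ?_) hnorm (htail.mul_left _))
    exact abs_hypTerm_le hc (by linarith) k.succ_ne_zero
  have hlim : Tendsto (fun n : ℕ => c / (c + n)) atTop (𝓝 0) :=
    tendsto_const_nhds.div_atTop (tendsto_atTop_add_const_left _ c tendsto_natCast_atTop_atTop)
  have := squeeze_zero_norm hbound (by simpa using hlim.mul_const (∑' k, ‖hypTerm a b c (k + 1)‖))
  simpa using this.add_const 1

theorem hypSum_eq (hc : 0 < c) (hca : 0 < c - a) (hcb : 0 < c - b) (hs : 0 < c - a - b) :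
    hypSum a b c = Gamma c * Gamma (c - a - b) / (Gamma (c - a) * Gamma (c - b)) := by
  set G : ℝ → ℝ := fun x =>
    hypSum a b x * (Gamma (x - a) * Gamma (x - b) / (Gamma x * Gamma (x - a - b))) with hG
  have hstep : ∀ x : ℝ, c ≤ x → G (x + 1) = G x := fun x hx => by
    have hx0 : 0 < x := by linarith
    have hxs : 0 < x - a - b := by linarith
    have hcontig := hypSum_contiguous (a := a) (b := b) hx0 hxs
    have := Gamma_pos_of_pos hx0
    have := Gamma_pos_of_pos hxs
    simp only [hG]
    rw [show x + 1 - a - b = x - a - b + 1 by ring, add_sub_right_comm x 1 a,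
      add_sub_right_comm x 1 b, Gamma_add_one (by linarith : x - a ≠ 0),
      Gamma_add_one (by linarith : x - b ≠ 0), Gamma_add_one hx0.ne', Gamma_add_one hxs.ne']
    field_simp
    linear_combination -(Gamma (x - a) * Gamma (x - b)) * hcontig
  have hconst : ∀ n : ℕ, G (c + n) = G c := fun n => by
    induction n with
    | zero => simp
    | succ n ih =>
      rw [Nat.cast_succ, ← add_assoc, hstep _ (le_add_of_nonneg_right n.cast_nonneg), ih]
  have hGamma : Tendsto (fun n : ℕ => Gamma (c - a + n) * Gamma (c - b + n) /
      (Gamma (c + n) * Gamma (c - a - b + n))) atTop (𝓝 1) := by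
    have h := (tendsto_Gamma_add_div_Gamma_add_mul_rpow hca hc).mul
      (tendsto_Gamma_add_div_Gamma_add_mul_rpow hcb hs)
    rw [mul_one] at h
    refine h.congr' ?_
    filter_upwards [eventually_gt_atTop 0] with n hn
    rw [mul_mul_mul_comm, ← rpow_add (by exact_mod_cast hn),
      show c - (c - a) + (c - a - b - (c - b)) = 0 by ring, rpow_zero, mul_one, div_mul_div_comm]
  have hlim : Tendsto (fun n : ℕ => G (c + n)) atTop (𝓝 1) := by
    simpa [hG, add_sub_right_comm _ (_ : ℝ) a, add_sub_right_comm _ (_ : ℝ) b] using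
      (tendsto_hypSum_add_nat hc hs).mul hGamma
  have hGc : G c = 1 := tendsto_nhds_unique (tendsto_const_nhds.congr fun n => (hconst n).symm) hlim
  have := Gamma_pos_of_pos hca
  have := Gamma_pos_of_pos hcb
  have := Gamma_pos_of_pos hc
  have := Gamma_pos_of_pos hs
  simp only [hG, mul_div_assoc'] at hGc
  rw [eq_div_iff (by positivity)]
  rwa [div_eq_one_iff_eq (by positivity)] at hGc

end Gauss

/-- Summing the double series `∑ (a)ₗ (b)ₗ (a')ₖ (b')ₖ / ((c)ₗ₊ₖ l! k!)` first over `k` and first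
over `l` gives the two sides. -/
theorem hasSum_hypTerm_mul_hypSum {a b a' b' c : ℝ} (hc : 0 < c) (hs : 0 < c - a - b)
    (hs' : 0 < c - a' - b') :
    HasSum (fun l => hypTerm a b c l * hypSum a' b' (c + l))
      (∑' k, hypTerm a' b' c k * hypSum a b (c + k)) := by
  set g : ℕ × ℕ → ℝ := fun p => poch a p.1 * poch b p.1 * poch a' p.2 * poch b' p.2 /
    (poch c (p.1 + p.2) * p.1 ! * p.2 !) with hg
  have hrow : ∀ l k, g (l, k) = hypTerm a b c l * hypTerm a' b' (c + l) k := fun l k => by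
    simp only [hg, hypTerm, poch_add]
    ring
  have hcol : ∀ l k, g (l, k) = hypTerm a' b' c k * hypTerm a b (c + k) l := fun l k => by
    simp only [hg, hypTerm]
    rw [add_comm l, poch_add]
    ring
  have hsum : Summable g := by
    refine Summable.of_norm_bounded ((summable_norm_hypTerm hc hs).mul_of_nonneg
      (summable_norm_hypTerm hc hs') (fun _ => norm_nonneg _) fun _ => norm_nonneg _)
      fun ⟨l, k⟩ => ?_
    rw [hrow, norm_mul]
    exact mul_le_mul_of_nonneg_left
      (abs_hypTerm_le_of_le hc (le_add_of_nonneg_right l.cast_nonneg) k) (abs_nonneg _)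
  have hrows : ∀ l, HasSum (fun k => g (l, k)) (hypTerm a b c l * hypSum a' b' (c + l)) :=
    fun l => by
      simp_rw [hrow]
      exact (summable_hypTerm (by positivity) (by linarith)).hasSum.mul_left _
  have hcols : ∀ k, HasSum (fun l => g (l, k)) (hypTerm a' b' c k * hypSum a b (c + k)) :=
    fun k => by
      simp_rw [hcol]
      exact (summable_hypTerm (by positivity) (by linarith)).hasSum.mul_left _
  have hswap : HasSum (g ∘ Equiv.prodComm ℕ ℕ) (∑' p, g p) :=
    (Equiv.hasSum_iff _).2 hsum.hasSum
  rw [(hswap.prod_fiberwise hcols).tsum_eq]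
  exact hsum.hasSum.prod_fiberwise hrows

lemma tsum_rpow_nat_add_le {s : ℝ} (hs : 0 < s) {m : ℕ} (hm : 0 < m) :
    ∑' i : ℕ, ((i + m : ℕ) : ℝ) ^ (-1 - s) ≤ (1 + s⁻¹) * (m : ℝ) ^ (-s) := by
  have hm' : (0 : ℝ) < m := by exact_mod_cast hm
  have hsum := (summable_nat_add_iff (f := fun n : ℕ => (n : ℝ) ^ (-1 - s)) m).2
    (summable_nat_rpow.2 (by linarith))
  have hhead : ((0 + m : ℕ) : ℝ) ^ (-1 - s) ≤ (m : ℝ) ^ (-s) := by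
    rw [zero_add]
    exact rpow_le_rpow_of_exponent_le (by exact_mod_cast hm) (by linarith)
  have htail : ∑' i : ℕ, ((i + 1 + m : ℕ) : ℝ) ^ (-1 - s) ≤ s⁻¹ * (m : ℝ) ^ (-s) := by
    refine Real.tsum_le_of_sum_range_le (fun _ => by positivity) fun n => ?_
    have hanti : AntitoneOn (fun x : ℝ => x ^ (-1 - s)) (Set.Icc m (m + n)) :=
      fun x hx y _ hxy => rpow_le_rpow_of_nonpos (hm'.trans_le hx.1) hxy (by linarith)
    have h0 : (0 : ℝ) ∉ Set.uIcc (m : ℝ) (m + n) := by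
      rw [Set.uIcc_of_le (by simp)]
      exact fun h => hm'.not_ge h.1
    have hmn : 0 ≤ ((m : ℝ) + n) ^ (-s) := by positivity
    calc ∑ i ∈ Finset.range n, ((i + 1 + m : ℕ) : ℝ) ^ (-1 - s)
        = ∑ i ∈ Finset.range n, ((m : ℝ) + (i + 1 : ℕ)) ^ (-1 - s) :=
          Finset.sum_congr rfl fun i _ => by push_cast; ring_nf
      _ ≤ ∫ x in (m : ℝ)..m + n, x ^ (-1 - s) := hanti.sum_le_integral
      _ = s⁻¹ * ((m : ℝ) ^ (-s) - ((m : ℝ) + n) ^ (-s)) := by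
          rw [integral_rpow (Or.inr ⟨by linarith, h0⟩), show -1 - s + 1 = -s by ring]
          field_simp
          ring
      _ ≤ s⁻¹ * (m : ℝ) ^ (-s) := by gcongr; linarith
  rw [hsum.tsum_eq_zero_add]
  linarith

theorem isBigO_sum_range_sub_of_hasSum {f : ℕ → ℝ} {L s : ℝ} (hs : 0 < s) (hf : HasSum f L)
    (hO : f =O[atTop] fun n => (n : ℝ) ^ (-1 - s)) :
    (fun m => ∑ i ∈ Finset.range m, f i - L) =O[atTop] fun m => (m : ℝ) ^ (-s) := by
  have hsum := summable_nat_rpow.2 (by linarith : -1 - s < -1)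
  have hnorm : Summable fun i => ‖f i‖ := summable_of_isBigO_nat hsum hO.norm_left
  obtain ⟨C, hC, hCf⟩ := hO.exists_pos
  obtain ⟨N, hN⟩ := eventually_atTop.1 hCf.bound
  refine IsBigO.of_bound (C * (1 + s⁻¹)) ?_
  filter_upwards [eventually_ge_atTop (max N 1)] with m hm
  have hm1 : 0 < m := by omega
  rw [← hf.tsum_eq, ← hf.summable.sum_add_tsum_nat_add m, sub_add_cancel_left, norm_neg,
    norm_of_nonneg (by positivity : (0 : ℝ) ≤ (m : ℝ) ^ (-s))]
  have hnorm_m := (summable_nat_add_iff (f := fun i => ‖f i‖) m).2 hnorm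
  have hsum_m := (summable_nat_add_iff (f := fun n : ℕ => (n : ℝ) ^ (-1 - s)) m).2 hsum
  calc ‖∑' i, f (i + m)‖
      ≤ ∑' i, ‖f (i + m)‖ := norm_tsum_le_tsum_norm hnorm_m
    _ ≤ ∑' i, C * ((i + m : ℕ) : ℝ) ^ (-1 - s) := by
        refine Summable.tsum_le_tsum (fun i => ?_) hnorm_m (hsum_m.mul_left C)
        have := hN (i + m) (by omega)
        rwa [norm_of_nonneg (rpow_nonneg (Nat.cast_nonneg (i + m)) _)] at this
    _ = C * ∑' i, ((i + m : ℕ) : ℝ) ^ (-1 - s) := tsum_mul_left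
    _ ≤ C * (1 + s⁻¹) * (m : ℝ) ^ (-s) := by
        rw [mul_assoc]
        exact mul_le_mul_of_nonneg_left (tsum_rpow_nat_add_le hs hm1) hC.le

section ThreeFTwo

variable {a₁ a₂ a₃ b₁ b₂ s : ℝ}

lemma Gamma_ratio_eq_hypTerm_mul_hypSum (ha₁ : 0 < a₁) (ha₂ : 0 < a₂) (ha₃ : 0 < a₃)
    (hb₁ : 0 < b₁) (hb₂ : 0 < b₂) (hβ : 0 < b₁ + b₂ - a₃) (l : ℕ) :
    Gamma (a₁ + l) * Gamma (a₂ + l) * Gamma (a₃ + l) /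
        (Gamma (b₁ + l) * Gamma (b₂ + l) * Gamma (1 + l))
      = Gamma a₁ * Gamma a₂ / Gamma (b₁ + b₂ - a₃) * (hypTerm a₁ a₂ (b₁ + b₂ - a₃) l *
        hypSum (b₁ - a₃) (b₂ - a₃) (b₁ + b₂ - a₃ + l)) := by
  have hl : (0 : ℝ) ≤ l := l.cast_nonneg
  rw [hypSum_eq (by linarith) (by linarith) (by linarith) (by linarith),
    hypTerm_eq_Gamma ha₁ ha₂ hβ, show b₁ + b₂ - a₃ + l - (b₁ - a₃) - (b₂ - a₃) = a₃ + l by ring,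
    show b₁ + b₂ - a₃ + l - (b₁ - a₃) = b₂ + l by ring,
    show b₁ + b₂ - a₃ + l - (b₂ - a₃) = b₁ + l by ring]
  have := Gamma_pos_of_pos ha₁
  have := Gamma_pos_of_pos ha₂
  have := Gamma_pos_of_pos hβ
  have := Gamma_pos_of_pos (by linarith : 0 < b₁ + b₂ - a₃ + l)
  have := Gamma_pos_of_pos (by linarith : 0 < b₁ + l)
  have := Gamma_pos_of_pos (by linarith : 0 < b₂ + l)
  have := Gamma_pos_of_pos (by linarith : 0 < 1 + (l : ℝ))
  field_simp

lemma hypTerm_mul_hypSum_eq_poch (ha₁ : 0 < a₁) (ha₂ : 0 < a₂)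
    (hs : s = b₁ + b₂ - a₁ - a₂ - a₃) (hspos : 0 < s) (k : ℕ) :
    hypTerm (b₁ - a₃) (b₂ - a₃) (b₁ + b₂ - a₃) k * hypSum a₁ a₂ (b₁ + b₂ - a₃ + k)
      = Gamma (b₁ + b₂ - a₃) * Gamma s / (Gamma (a₁ + s) * Gamma (a₂ + s)) *
        (poch s k * poch (b₂ - a₃) k * poch (b₁ - a₃) k /
          (poch (a₁ + s) k * poch (a₂ + s) k * k !)) := by
  have hk : (0 : ℝ) ≤ k := k.cast_nonneg
  have hβ : 0 < b₁ + b₂ - a₃ := by linarith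
  have ha₁s : 0 < a₁ + s := by linarith
  have ha₂s : 0 < a₂ + s := by linarith
  rw [hypSum_eq (by linarith) (by linarith) (by linarith) (by linarith),
    show b₁ + b₂ - a₃ + k - a₁ - a₂ = s + k by linarith,
    show b₁ + b₂ - a₃ + k - a₁ = a₂ + s + k by linarith,
    show b₁ + b₂ - a₃ + k - a₂ = a₁ + s + k by linarith,
    Gamma_add_nat hβ, Gamma_add_nat hspos, Gamma_add_nat ha₁s, Gamma_add_nat ha₂s, hypTerm]
  have := Gamma_pos_of_pos hβ
  have := Gamma_pos_of_pos ha₁s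
  have := Gamma_pos_of_pos ha₂s
  have := poch_pos hβ k
  have := poch_pos ha₁s k
  have := poch_pos ha₂s k
  field_simp

end ThreeFTwo

theorem three_F_two_partial_sums (a₁ a₂ a₃ b₁ b₂ s : ℝ)
    (ha₁ : 0 < a₁) (ha₂ : 0 < a₂) (ha₃ : 0 < a₃) (hb₁ : 0 < b₁) (hb₂ : 0 < b₂)
    (hs : s = b₁ + b₂ - a₁ - a₂ - a₃) (hspos : 0 < s) :
    Tendsto (fun m : ℕ => ∑ l ∈ Finset.range m,
        Gamma (a₁ + l) * Gamma (a₂ + l) * Gamma (a₃ + l) /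
          (Gamma (b₁ + l) * Gamma (b₂ + l) * Gamma (1 + l)))
      atTop
      (nhds (Gamma a₁ * Gamma a₂ * Gamma s / (Gamma (a₁ + s) * Gamma (a₂ + s)) *
        ∑' k : ℕ, poch s k * poch (b₂ - a₃) k * poch (b₁ - a₃) k /
          (poch (a₁ + s) k * poch (a₂ + s) k * Nat.factorial k))) ∧
    (fun m : ℕ =>
        (∑ l ∈ Finset.range m,
          Gamma (a₁ + l) * Gamma (a₂ + l) * Gamma (a₃ + l) /
            (Gamma (b₁ + l) * Gamma (b₂ + l) * Gamma (1 + l)))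
        - Gamma a₁ * Gamma a₂ * Gamma s / (Gamma (a₁ + s) * Gamma (a₂ + s)) *
            ∑' k : ℕ, poch s k * poch (b₂ - a₃) k * poch (b₁ - a₃) k /
              (poch (a₁ + s) k * poch (a₂ + s) k * Nat.factorial k))
      =O[atTop] fun m : ℕ => (m : ℝ) ^ (-s) := by
  have hβ : 0 < b₁ + b₂ - a₃ := by linarith
  have hterm := Gamma_ratio_eq_hypTerm_mul_hypSum ha₁ ha₂ ha₃ hb₁ hb₂ hβ
  have hsum := (hasSum_hypTerm_mul_hypSum (a' := b₁ - a₃) (b' := b₂ - a₃) hβ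
    (by linarith : 0 < b₁ + b₂ - a₃ - a₁ - a₂) (by linarith)).mul_left
    (Gamma a₁ * Gamma a₂ / Gamma (b₁ + b₂ - a₃))
  have hconst : Gamma a₁ * Gamma a₂ / Gamma (b₁ + b₂ - a₃) *
      (Gamma (b₁ + b₂ - a₃) * Gamma s / (Gamma (a₁ + s) * Gamma (a₂ + s)))
      = Gamma a₁ * Gamma a₂ * Gamma s / (Gamma (a₁ + s) * Gamma (a₂ + s)) := by
    have := Gamma_pos_of_pos hβ
    field_simp
  rw [tsum_congr (hypTerm_mul_hypSum_eq_poch ha₁ ha₂ hs hspos), tsum_mul_left, ← mul_assoc,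
    hconst] at hsum
  simp only [← hterm] at hsum
  refine ⟨hsum.tendsto_sum_nat, isBigO_sum_range_sub_of_hasSum hspos hsum ?_⟩
  -- in `hterm` the `₂F₁` factor tends to `1`
  refine (((isBigO_hypTerm hβ).mul ((tendsto_hypSum_add_nat hβ
    (by linarith : 0 < b₁ + b₂ - a₃ - (b₁ - a₃) - (b₂ - a₃))).isBigO_one ℝ)).const_mul_left
    _).congr (fun l => (hterm l).symm) fun l => ?_
  rw [mul_one, show a₁ + a₂ - (b₁ + b₂ - a₃) - 1 = -1 - s by linarith]
end
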